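/- arXiv:1611.00507 — 12 statements merged into one kernel-verified Lean document; each statement's English description precedes it below -/
import Mathlib

section
/- Let ψ : ℝⁿ → ℝ be concave, let v₁, …, v_m ∈ ℝⁿ (m ≥ 1), and set u_t = v₁ + ⋯ + v_t for t ∈ {1,…,m}. Suppose that for each t ∈ {1,…,m}, y_t ∈ ℝⁿ is a supergradient of ψ at u_t. Then ∑_{t=1}^m ⟨v_t, y_t⟩ ≤ ψ(u_m) − ψ(0). (Applied with v_t = A_t x̃_t and y_t = ỹ_t satisfying the maximizer condition of the simultaneous-update algorithm, this is exactly Lemma 1's duality-gap bound P_sim − D_sim ≥ ψ*(ỹ_{m+1}) + ψ(0).) -/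
open RealInnerProductSpace

/-- `y` is a supergradient of `ψ` at `u`. -/
def IsSupergradient {n : ℕ} (ψ : EuclideanSpace ℝ (Fin n) → ℝ)
    (u y : EuclideanSpace ℝ (Fin n)) : Prop :=
  ∀ u', ψ u' ≤ ψ u + ⟪y, u' - u⟫

/-- Lemma 1, simultaneous-update duality gap bound:
with `u t = v 0 + ⋯ + v (t-1)` and `y t` a supergradient of `ψ` at `u (t+1)`
(i.e. `yₜ` a supergradient at `uₜ` in 1-based indexing),
`∑ₜ ⟨vₜ, yₜ⟩ ≤ ψ(u_m) − ψ(0)`. -/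
theorem stmt_0 {n : ℕ} (m : ℕ) (hm : 1 ≤ m)
    (ψ : EuclideanSpace ℝ (Fin n) → ℝ) (hψ : ConcaveOn ℝ Set.univ ψ)
    (v y u : ℕ → EuclideanSpace ℝ (Fin n))
    (hu : ∀ t, u t = ∑ s ∈ Finset.range t, v s)
    (hy : ∀ t < m, IsSupergradient ψ (u (t + 1)) (y t)) :
    ∑ t ∈ Finset.range m, ⟪v t, y t⟫ ≤ ψ (u m) - ψ 0 := by
  have h0 : u 0 = 0 := by simp [hu]
  calc ∑ t ∈ Finset.range m, ⟪v t, y t⟫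
      ≤ ∑ t ∈ Finset.range m, (ψ (u (t+1)) - ψ (u t)) := by
        apply Finset.sum_le_sum
        intro t ht
        have := hy t (Finset.mem_range.mp ht) (u t)
        have hv : u t - u (t+1) = -(v t) := by
          simp [hu, Finset.sum_range_succ]
        rw [hv] at this
        rw [real_inner_comm]
        simp only [inner_neg_right] at this
        linarith
    _ = ψ (u m) - ψ (u 0) := Finset.sum_range_sub (fun t => ψ (u t)) m
    _ = ψ (u m) - ψ 0 := by rw [h0]
end

section
/- Let ψ : ℝⁿ → ℝ be concave, let v₁, …, v_m ∈ ℝⁿ (m ≥ 1), and set u₀ = 0 and u_t = v₁ + ⋯ + v_t for t ∈ {1,…,m}. Suppose that for each t ∈ {1,…,m+1}, y_t ∈ ℝⁿ is a supergradient of ψ at u_{t−1}. Then ∑_{t=1}^m ⟨v_t, y_t⟩ ≤ ψ(u_m) − ψ(0) + ∑_{t=1}^m ⟨v_t, y_t − y_{t+1}⟩. (Applied with v_t = A_t x̂_t, this is Lemma 1's duality-gap bound for the sequential-update algorithm: P_seq − D_seq ≥ ψ*(ŷ_{m+1}) + ψ(0) + ∑_t ⟨A_t x̂_t, ŷ_{t+1}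 − ŷ_t⟩.) -/
open RealInnerProductSpace

/-- Lemma 1, sequential-update duality gap bound:
with `u 0 = 0`, `u t = v 0 + ⋯ + v (t-1)` and, for `t ∈ {0,…,m}`,
`y t` a supergradient of `ψ` at `u t` (i.e. `yₜ` a supergradient at `u_{t−1}`
in 1-based indexing, for `t ∈ {1,…,m+1}`),
`∑ₜ ⟨vₜ, yₜ⟩ ≤ ψ(u_m) − ψ(0) + ∑ₜ ⟨vₜ, yₜ − y_{t+1}⟩`. -/
theorem stmt_1 {n : ℕ} (m : ℕ) (hm : 1 ≤ m)
    (ψ : EuclideanSpace ℝ (Fin n) → ℝ) (hψ : ConcaveOn ℝ Set.univ ψ)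
    (v y u : ℕ → EuclideanSpace ℝ (Fin n))
    (hu : ∀ t, u t = ∑ s ∈ Finset.range t, v s)
    (hy : ∀ t ≤ m, IsSupergradient ψ (u t) (y t)) :
    ∑ t ∈ Finset.range m, ⟪v t, y t⟫ ≤
      ψ (u m) - ψ 0 + ∑ t ∈ Finset.range m, ⟪v t, y t - y (t + 1)⟫ := by
  have key : ∀ t ∈ Finset.range m, ⟪v t, y (t + 1)⟫ ≤ ψ (u (t + 1)) - ψ (u t) := by
    intro t ht
    have htm : t + 1 ≤ m := Finset.mem_range.mp ht
    have h := hy (t + 1) htm (u t)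
    have huv : u t - u (t + 1) = -(v t) := by
      simp [hu, Finset.sum_range_succ]
    rw [huv, inner_neg_right] at h
    rw [real_inner_comm]
    linarith
  have hsum : ∑ t ∈ Finset.range m, ⟪v t, y (t + 1)⟫ ≤ ψ (u m) - ψ 0 := by
    calc ∑ t ∈ Finset.range m, ⟪v t, y (t + 1)⟫
        ≤ ∑ t ∈ Finset.range m, (ψ (u (t + 1)) - ψ (u t)) := Finset.sum_le_sum key
      _ = ψ (u m) - ψ (u 0) := Finset.sum_range_sub (fun t => ψ (u t)) m
      _ = ψ (u m) - ψ 0 := by simp [hu]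
  have hexp : ∑ t ∈ Finset.range m, ⟪v t, y t - y (t + 1)⟫
      = ∑ t ∈ Finset.range m, ⟪v t, y t⟫ - ∑ t ∈ Finset.range m, ⟪v t, y (t + 1)⟫ := by
    simp [inner_sub_right, Finset.sum_sub_distrib]
  rw [hexp]
  linarith
end

section
/- (Theorem 1, simultaneous update.) Let K ⊆ ℝⁿ be a closed convex cone with dual cone K*, and let ψ : ℝⁿ → ℝ be concave with ψ(0) = 0 satisfying Assumption 1 on K. For t ∈ {1,…,m} let F_t ⊆ ℝᵏ and let A_t : ℝᵏ → ℝⁿ be linear with A_t x ∈ K for every x ∈ F_t. Suppose x̃_t ∈ F_t and ỹ_t ∈ ℝⁿ satisfy: ỹ_t is a supergradient of ψ at u_t := ∑_{s=1}^t A_s x̃_s, and ⟨x̃_t, A_tᵀ ỹ_t⟩ ≥ ⟨x, A_tᵀ ỹ_t⟩ for all x ∈ F_t. Let ỹ_{m+1} be a supergradient of ψ at u_m such that z − ỹ_{m+1} ∈ K* for every supergradient z of ψ at u_m. Let ᾱ ∈ ℝ satisfy ⟨y, u⟩ ≥ (ᾱ + 1)·ψ(u) for every u ∈ K and every supergradient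 y of ψ at u. Then for every choice of x'_t ∈ F_t (t ∈ {1,…,m}) and every w ∈ ℝⁿ: (1 − ᾱ)·ψ(u_m) ≥ ∑_{t=1}^m ⟨A_t x'_t, ỹ_{m+1}⟩ − ⟨ỹ_{m+1}, w⟩ + ψ(w). (Taking suprema over x'_t and infimum over w, this says P_sim ≥ D★/(1 − ᾱ_ψ), where D★ is the optimal value of the Fenchel dual ∑_t σ_t(A_tᵀ y) − ψ*(y).) -/
open RealInnerProductSpace

/-- The dual cone of a set `K`. -/
def dualCone {n : ℕ} (K : Set (EuclideanSpace ℝ (Fin n))) :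
    Set (EuclideanSpace ℝ (Fin n)) :=
  {y | ∀ u ∈ K, 0 ≤ ⟪y, u⟫}

/-- Assumption 1 of the paper. -/
def Assumption1 {n : ℕ} (K : Set (EuclideanSpace ℝ (Fin n)))
    (ψ : EuclideanSpace ℝ (Fin n) → ℝ) : Prop :=
  ∀ u ∈ K, ∀ v ∈ K, u - v ∈ K →
    ∃ y, IsSupergradient ψ u y ∧
      ∀ z, IsSupergradient ψ v z → z - y ∈ dualCone K

/-- Theorem 1, simultaneous update: `(1 − ᾱ)·ψ(u_m)` dominates the dual
objective evaluated at `ỹ_{m+1}`.  All indices are 0-based: `u t` is the sum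
of the first `t` terms `A s (xt s)`, and `yt t` is a supergradient at
`u (t+1)`. -/
theorem stmt_3 {n k m : ℕ}
    (K : Set (EuclideanSpace ℝ (Fin n)))
    (hKclosed : IsClosed K) (hKconvex : Convex ℝ K)
    (hKcone : ∀ c : ℝ, 0 < c → ∀ u ∈ K, c • u ∈ K)
    (ψ : EuclideanSpace ℝ (Fin n) → ℝ)
    (hψ : ConcaveOn ℝ Set.univ ψ) (hψ0 : ψ 0 = 0)
    (hassum : Assumption1 K ψ)
    (F : ℕ → Set (EuclideanSpace ℝ (Fin k)))
    (A : ℕ → EuclideanSpace ℝ (Fin k) →ₗ[ℝ] EuclideanSpace ℝ (Fin n))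
    (hA : ∀ t < m, ∀ x ∈ F t, A t x ∈ K)
    (xt : ℕ → EuclideanSpace ℝ (Fin k))
    (hxt : ∀ t < m, xt t ∈ F t)
    (u : ℕ → EuclideanSpace ℝ (Fin n))
    (hu : ∀ t, u t = ∑ s ∈ Finset.range t, A s (xt s))
    (yt : ℕ → EuclideanSpace ℝ (Fin n))
    (hyt : ∀ t < m, IsSupergradient ψ (u (t + 1)) (yt t))
    (hmax : ∀ t < m, ∀ x ∈ F t, ⟪A t x, yt t⟫ ≤ ⟪A t (xt t), yt t⟫)
    (ylast : EuclideanSpace ℝ (Fin n))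
    (hylast : IsSupergradient ψ (u m) ylast)
    (hylastmin : ∀ z, IsSupergradient ψ (u m) z → z - ylast ∈ dualCone K)
    (α : ℝ)
    (hα : ∀ v ∈ K, ∀ y, IsSupergradient ψ v y → (α + 1) * ψ v ≤ ⟪y, v⟫)
    (x' : ℕ → EuclideanSpace ℝ (Fin k))
    (hx' : ∀ t < m, x' t ∈ F t)
    (w : EuclideanSpace ℝ (Fin n)) :
    (∑ t ∈ Finset.range m, ⟪A t (x' t), ylast⟫) - ⟪ylast, w⟫ + ψ w ≤
      (1 - α) * ψ (u m) := by
  -- K is closed under addition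
  have hadd : ∀ a ∈ K, ∀ b ∈ K, a + b ∈ K := by
    intro a ha b hb
    have hmid : (1/2 : ℝ) • a + (1/2 : ℝ) • b ∈ K :=
      hKconvex ha hb (by norm_num) (by norm_num) (by norm_num)
    have h2 := hKcone 2 (by norm_num) _ hmid
    have heq : (2:ℝ) • ((1/2 : ℝ) • a + (1/2 : ℝ) • b) = a + b := by
      rw [smul_add, smul_smul, smul_smul]; norm_num
    rwa [heq] at h2
  -- 0 ∈ K once K is nonempty
  have hK0 : 0 < m → (0 : EuclideanSpace ℝ (Fin n)) ∈ K := by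
    intro hm
    have ha : A 0 (xt 0) ∈ K := hA 0 hm _ (hxt 0 hm)
    have htend : Filter.Tendsto (fun j : ℕ => (1/((j:ℝ)+1)) • A 0 (xt 0))
        Filter.atTop (nhds 0) := by
      have := (tendsto_one_div_add_atTop_nhds_zero_nat (𝕜 := ℝ)).smul_const (A 0 (xt 0))
      simpa using this
    exact hKclosed.mem_of_tendsto htend
      (Filter.Eventually.of_forall fun j => hKcone _ (by positivity) _ ha)
  -- the partial sums lie in K
  have huK : 0 < m → ∀ t, t ≤ m → u t ∈ K := by
    intro hm t
    induction t with
    | zero => intro _; rw [hu 0]; simpa using hK0 hm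
    | succ s ih =>
      intro hsm
      have hs : u (s+1) = u s + A s (xt s) := by
        rw [hu, hu, Finset.sum_range_succ]
      have hslt : s < m := by omega
      rw [hs]
      exact hadd _ (ih (by omega)) _ (hA s hslt _ (hxt s hslt))
  -- differences of partial sums lie in K
  have hdiff : ∀ t < m, u m - u (t+1) ∈ K := by
    intro t ht
    have key : ∀ j, t+1+j ≤ m → u (t+1+j) - u (t+1) ∈ K := by
      intro j
      induction j with
      | zero => intro _; simpa using hK0 (by omega)
      | succ i ih =>
        intro hle
        have hs : u (t+1+(i+1)) = u (t+1+i) + A (t+1+i) (xt (t+1+i)) := by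
          rw [show t+1+(i+1) = (t+1+i)+1 by ring, hu, hu, Finset.sum_range_succ]
        have hm' : t+1+i < m := by omega
        have hmem : u (t+1+i) - u (t+1) + A (t+1+i) (xt (t+1+i)) ∈ K :=
          hadd _ (ih (by omega)) _ (hA _ hm' _ (hxt _ hm'))
        rw [hs]
        convert hmem using 1
        abel
    have := key (m - (t+1)) (by omega)
    rwa [show t+1+(m-(t+1)) = m by omega] at this
  -- per-term bound
  have hterm : ∀ t < m, ⟪A t (x' t), ylast⟫ ≤ ⟪A t (xt t), yt t⟫ := by
    intro t ht
    obtain ⟨y, hy, hy2⟩ := hassum (u m) (huK (by omega) m le_rfl)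
      (u (t+1)) (huK (by omega) (t+1) (by omega)) (hdiff t ht)
    have h1 : yt t - y ∈ dualCone K := hy2 _ (hyt t ht)
    have h2 : y - ylast ∈ dualCone K := hylastmin y hy
    have hx : A t (x' t) ∈ K := hA t ht _ (hx' t ht)
    have q1 : (0:ℝ) ≤ ⟪yt t - y, A t (x' t)⟫ := h1 _ hx
    have q2 : (0:ℝ) ≤ ⟪y - ylast, A t (x' t)⟫ := h2 _ hx
    rw [inner_sub_left] at q1 q2
    have step : ⟪A t (x' t), ylast⟫ ≤ ⟪A t (x' t), yt t⟫ := by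
      have e1 := real_inner_comm (A t (x' t)) ylast
      have e2 := real_inner_comm (A t (x' t)) (yt t)
      linarith
    exact step.trans (hmax t ht _ (hx' t ht))
  -- telescoping bound
  have htel : ∀ t < m, ⟪A t (xt t), yt t⟫ ≤ ψ (u (t+1)) - ψ (u t) := by
    intro t ht
    have hs : u (t+1) = u t + A t (xt t) := by
      rw [hu, hu, Finset.sum_range_succ]
    have hsg := hyt t ht (u t)
    have hinner : ⟪yt t, u t - u (t+1)⟫ = -⟪A t (xt t), yt t⟫ := by
      rw [show u t - u (t+1) = -(A t (xt t)) by rw [hs]; abel, inner_neg_right,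
        real_inner_comm]
    rw [hinner] at hsg
    linarith
  have hS : ∑ t ∈ Finset.range m, ⟪A t (x' t), ylast⟫ ≤ ψ (u m) := by
    calc ∑ t ∈ Finset.range m, ⟪A t (x' t), ylast⟫
        ≤ ∑ t ∈ Finset.range m, (ψ (u (t+1)) - ψ (u t)) :=
          Finset.sum_le_sum fun t ht =>
            (hterm t (Finset.mem_range.mp ht)).trans (htel t (Finset.mem_range.mp ht))
      _ = ψ (u m) - ψ (u 0) := Finset.sum_range_sub (fun t => ψ (u t)) m
      _ = ψ (u m) := by rw [hu 0]; simp [hψ0]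
  have hw : ψ w - ⟪ylast, w⟫ ≤ ψ (u m) - ⟪ylast, u m⟫ := by
    have := hylast w
    rw [inner_sub_right] at this
    linarith
  have hαm : (α + 1) * ψ (u m) ≤ ⟪ylast, u m⟫ := by
    rcases Nat.eq_zero_or_pos m with hm | hm
    · subst hm; rw [hu 0]; simp [hψ0]
    · exact hα _ (huK hm m le_rfl) _ hylast
  linarith
end

section
/- (Theorem 1, sequential update.) Let K ⊆ ℝⁿ be a closed convex cone with dual cone K*, and let ψ : ℝⁿ → ℝ be concave with ψ(0) = 0 satisfying Assumption 1 on K. For t ∈ {1,…,m} let F_t ⊆ ℝᵏ and let A_t : ℝᵏ → ℝⁿ be linear with A_t x ∈ K for every x ∈ F_t. Set u₀ = 0 and u_t = ∑_{s=1}^t A_s x̂_s. Suppose x̂_t ∈ F_t and ŷ_t ∈ ℝⁿ satisfy: for t ∈ {1,…,m}, ŷ_t is a supergradient of ψ at u_{t−1} and ⟨x̂_t, A_tᵀ ŷ_t⟩ ≥ ⟨x, A_tᵀ ŷ_t⟩ for all x ∈ F_t; and ŷ_{m+1} is a supergradient of ψ at u_m such that z − ŷ_{m+1} ∈ K* for every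 supergradient z of ψ at u_m. Let ᾱ ∈ ℝ satisfy ⟨y, u⟩ ≥ (ᾱ + 1)·ψ(u) for every u ∈ K and every supergradient y of ψ at u. Then for every choice of x'_t ∈ F_t and every w ∈ ℝⁿ: (1 − ᾱ)·ψ(u_m) ≥ ∑_{t=1}^m ⟨A_t x'_t, ŷ_{m+1}⟩ − ⟨ŷ_{m+1}, w⟩ + ψ(w) + ∑_{t=1}^m ⟨A_t x̂_t, ŷ_{t+1} − ŷ_t⟩. (This says P_seq ≥ (1/(1 − ᾱ_ψ))·(D★ + ∑_t ⟨A_t x̂_t, ŷ_{t+1} − ŷ_t⟩).) -/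
open RealInnerProductSpace

/-- Theorem 1, sequential update.  Indices are 0-based: `u t` is the sum of
the first `t` terms `A s (xt s)`; for `t < m`, `y t` is a supergradient of
`ψ` at `u t` (`ŷₜ` at `u_{t−1}` in 1-based indexing), and `y m` is the
minimal supergradient at `u m` (playing the role of `ŷ_{m+1}`). -/
theorem stmt_4 {n k m : ℕ}
    (K : Set (EuclideanSpace ℝ (Fin n)))
    (hKclosed : IsClosed K) (hKconvex : Convex ℝ K)
    (hKcone : ∀ c : ℝ, 0 < c → ∀ u ∈ K, c • u ∈ K)
    (ψ : EuclideanSpace ℝ (Fin n) → ℝ)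
    (hψ : ConcaveOn ℝ Set.univ ψ) (hψ0 : ψ 0 = 0)
    (hassum : Assumption1 K ψ)
    (F : ℕ → Set (EuclideanSpace ℝ (Fin k)))
    (A : ℕ → EuclideanSpace ℝ (Fin k) →ₗ[ℝ] EuclideanSpace ℝ (Fin n))
    (hA : ∀ t < m, ∀ x ∈ F t, A t x ∈ K)
    (xt : ℕ → EuclideanSpace ℝ (Fin k))
    (hxt : ∀ t < m, xt t ∈ F t)
    (u : ℕ → EuclideanSpace ℝ (Fin n))
    (hu : ∀ t, u t = ∑ s ∈ Finset.range t, A s (xt s))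
    (y : ℕ → EuclideanSpace ℝ (Fin n))
    (hy : ∀ t < m, IsSupergradient ψ (u t) (y t))
    (hmax : ∀ t < m, ∀ x ∈ F t, ⟪A t x, y t⟫ ≤ ⟪A t (xt t), y t⟫)
    (hylast : IsSupergradient ψ (u m) (y m))
    (hylastmin : ∀ z, IsSupergradient ψ (u m) z → z - y m ∈ dualCone K)
    (α : ℝ)
    (hα : ∀ v ∈ K, ∀ z, IsSupergradient ψ v z → (α + 1) * ψ v ≤ ⟪z, v⟫)
    (x' : ℕ → EuclideanSpace ℝ (Fin k))
    (hx' : ∀ t < m, x' t ∈ F t)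
    (w : EuclideanSpace ℝ (Fin n)) :
    (∑ t ∈ Finset.range m, ⟪A t (x' t), y m⟫) - ⟪y m, w⟫ + ψ w +
        ∑ t ∈ Finset.range m, ⟪A t (xt t), y (t + 1) - y t⟫ ≤
      (1 - α) * ψ (u m) := by
  classical
  rcases Nat.eq_zero_or_pos m with hm | hm
  · subst hm
    have h0 : u 0 = 0 := by simpa using hu 0
    have hw := hylast w
    rw [h0, hψ0] at hw ⊢
    simp only [sub_zero, zero_add] at hw
    simp only [Finset.range_zero, Finset.sum_empty]
    linarith
  · -- 0 ∈ K
    have hv0 : A 0 (xt 0) ∈ K := hA 0 hm _ (hxt 0 hm)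
    have h0K : (0 : EuclideanSpace ℝ (Fin n)) ∈ K := by
      have ht : Filter.Tendsto (fun c : ℝ => c • A 0 (xt 0))
          (nhdsWithin 0 (Set.Ioi 0)) (nhds 0) := by
        have h := (continuous_id.smul
          (continuous_const : Continuous fun _ : ℝ => A 0 (xt 0))).tendsto (0 : ℝ)
        have h2 : Filter.Tendsto (fun c : ℝ => c • A 0 (xt 0)) (nhdsWithin 0 (Set.Ioi 0)) (nhds ((0 : ℝ) • A 0 (xt 0))) := h.mono_left nhdsWithin_le_nhds
        rwa [zero_smul] at h2
      exact hKclosed.mem_of_tendsto ht (Filter.eventually_of_mem self_mem_nhdsWithin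
        (fun c hc => hKcone c hc _ hv0))
    have hKadd : ∀ a ∈ K, ∀ b ∈ K, a + b ∈ K := by
      intro a ha b hb
      have hmid : (1/2 : ℝ) • a + (1/2 : ℝ) • b ∈ K :=
        hKconvex ha hb (by norm_num) (by norm_num) (by norm_num)
      have h2 := hKcone 2 two_pos _ hmid
      have : (2 : ℝ) • ((1/2 : ℝ) • a + (1/2 : ℝ) • b) = a + b := by
        rw [smul_add, smul_smul, smul_smul]; norm_num
      rwa [this] at h2
    have hsumK : ∀ (s : Finset ℕ) (f : ℕ → EuclideanSpace ℝ (Fin n)),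
        (∀ i ∈ s, f i ∈ K) → ∑ i ∈ s, f i ∈ K := by
      intro s f hf
      induction s using Finset.induction with
      | empty => simpa using h0K
      | @insert a s ha ih =>
        rw [Finset.sum_insert ha]
        exact hKadd _ (hf a (Finset.mem_insert_self a s)) _
          (ih fun i hi => hf i (Finset.mem_insert_of_mem hi))
    have huK : ∀ t, t ≤ m → u t ∈ K := by
      intro t htm
      rw [hu t]
      exact hsumK _ _ (fun i hi => hA i (lt_of_lt_of_le (Finset.mem_range.mp hi) htm) _
        (hxt i (lt_of_lt_of_le (Finset.mem_range.mp hi) htm)))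
    have hdiffK : ∀ t, t ≤ m → u m - u t ∈ K := by
      intro t htm
      have he : u m - u t = ∑ i ∈ Finset.Ico t m, A i (xt i) := by
        rw [hu m, hu t]
        exact (Finset.sum_Ico_eq_sub _ htm).symm
      rw [he]
      exact hsumK _ _ (fun i hi => hA i (Finset.mem_Ico.mp hi).2 _
        (hxt i (Finset.mem_Ico.mp hi).2))
    have hdual : ∀ t, t < m → ∀ v ∈ K, ⟪y m, v⟫ ≤ ⟪y t, v⟫ := by
      intro t htm v hv
      obtain ⟨ys, hys, hysmin⟩ :=
        hassum (u m) (huK m le_rfl) (u t) (huK t htm.le) (hdiffK t htm.le)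
      have h1 := hysmin (y t) (hy t htm) v hv
      have h2 := hylastmin ys hys v hv
      have e1 : ⟪y t - ys, v⟫ = ⟪y t, v⟫ - ⟪ys, v⟫ := inner_sub_left _ _ _
      have e2 : ⟪ys - y m, v⟫ = ⟪ys, v⟫ - ⟪y m, v⟫ := inner_sub_left _ _ _
      linarith
    have step1 : ∀ t, t < m → ⟪A t (x' t), y m⟫ ≤ ⟪A t (xt t), y t⟫ := by
      intro t ht
      have h1 : ⟪y m, A t (x' t)⟫ ≤ ⟪y t, A t (x' t)⟫ :=
        hdual t ht _ (hA t ht _ (hx' t ht))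
      have h2 := hmax t ht _ (hx' t ht)
      have c1 : ⟪y m, A t (x' t)⟫ = ⟪A t (x' t), y m⟫ := real_inner_comm _ _
      have c2 : ⟪y t, A t (x' t)⟫ = ⟪A t (x' t), y t⟫ := real_inner_comm _ _
      linarith
    have step2 : ∀ t, t < m → ⟪A t (xt t), y (t + 1)⟫ ≤ ψ (u (t + 1)) - ψ (u t) := by
      intro t ht
      have hsg : IsSupergradient ψ (u (t + 1)) (y (t + 1)) := by
        rcases lt_or_eq_of_le (Nat.succ_le_of_lt ht) with h | h
        · exact hy (t + 1) h
        · have h' : t + 1 = m := h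
          rw [h']; exact hylast
      have hsgu := hsg (u t)
      have hAeq : A t (xt t) = u (t + 1) - u t := by
        rw [hu (t + 1), hu t, Finset.sum_range_succ]; abel
      rw [hAeq]
      have e1 : ⟪u (t + 1) - u t, y (t + 1)⟫
          = ⟪u (t + 1), y (t + 1)⟫ - ⟪u t, y (t + 1)⟫ := inner_sub_left _ _ _
      have e2 : ⟪y (t + 1), u t - u (t + 1)⟫
          = ⟪y (t + 1), u t⟫ - ⟪y (t + 1), u (t + 1)⟫ := inner_sub_right _ _ _
      have c1 : ⟪u t, y (t + 1)⟫ = ⟪y (t + 1), u t⟫ := real_inner_comm _ _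
      have c2 : ⟪u (t + 1), y (t + 1)⟫ = ⟪y (t + 1), u (t + 1)⟫ := real_inner_comm _ _
      linarith
    have hcomb : ∀ t ∈ Finset.range m,
        ⟪A t (x' t), y m⟫ + ⟪A t (xt t), y (t + 1) - y t⟫ ≤ ⟪A t (xt t), y (t + 1)⟫ := by
      intro t ht
      have ht' := Finset.mem_range.mp ht
      have h1 := step1 t ht'
      have e : ⟪A t (xt t), y (t + 1) - y t⟫
          = ⟪A t (xt t), y (t + 1)⟫ - ⟪A t (xt t), y t⟫ := inner_sub_right _ _ _
      linarith
    have hsum2 : ∑ t ∈ Finset.range m, ⟪A t (xt t), y (t + 1)⟫ ≤ ψ (u m) := by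
      calc ∑ t ∈ Finset.range m, ⟪A t (xt t), y (t + 1)⟫
          ≤ ∑ t ∈ Finset.range m, (ψ (u (t + 1)) - ψ (u t)) :=
            Finset.sum_le_sum (fun t ht => step2 t (Finset.mem_range.mp ht))
        _ = ψ (u m) - ψ (u 0) := Finset.sum_range_sub (fun t => ψ (u t)) m
        _ = ψ (u m) := by
            have h0 : u 0 = 0 := by simpa using hu 0
            rw [h0, hψ0, sub_zero]
    have hS : (∑ t ∈ Finset.range m, ⟪A t (x' t), y m⟫) +
        ∑ t ∈ Finset.range m, ⟪A t (xt t), y (t + 1) - y t⟫ ≤ ψ (u m) := by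
      rw [← Finset.sum_add_distrib]
      exact le_trans (Finset.sum_le_sum hcomb) hsum2
    have hw : ψ w - ⟪y m, w⟫ ≤ ψ (u m) - ⟪y m, u m⟫ := by
      have h := hylast w
      have e : ⟪y m, w - u m⟫ = ⟪y m, w⟫ - ⟪y m, u m⟫ := inner_sub_right _ _ _
      linarith
    have halpha : (α + 1) * ψ (u m) ≤ ⟪y m, u m⟫ := hα (u m) (huK m le_rfl) (y m) hylast
    linarith
end

section
/- Let K ⊆ ℝⁿ be a closed convex cone with dual cone K*, and let ψ : ℝⁿ → ℝ be concave satisfying Assumption 1 on K. For t ∈ {1,…,m} let v_t ∈ K and set u_t = v₁ + ⋯ + v_t; suppose ỹ_t is a supergradient of ψ at u_t for each t ∈ {1,…,m}, and let ỹ_{m+1} be a supergradient of ψ at u_m such that z − ỹ_{m+1} ∈ K* for every supergradient z of ψ at u_m. Then for every t ∈ {1,…,m}, ỹ_t − ỹ_{m+1} ∈ K*; consequently, for any linear map A : ℝᵏ → ℝⁿ and any x ∈ ℝᵏ with A x ∈ K, ⟨A x, ỹ_{m+1}⟩ ≤ ⟨A x, ỹ_t⟩. (This is the key monotonicity step in the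 proof of Theorem 1, giving ∑_t σ_t(A_tᵀ ỹ_t) ≥ ∑_t σ_t(A_tᵀ ỹ_{m+1}) and hence D_sim ≥ D★.) -/
open RealInnerProductSpace

/-- Key monotonicity step of Theorem 1: `ỹₜ − ỹ_{m+1} ∈ K*` and the induced
support-function inequality.  Indices are 0-based: `y t` is a supergradient
at `u (t+1)` (i.e. `ỹₜ` at `uₜ` in 1-based indexing). -/
theorem stmt_7 {n k m : ℕ}
    (K : Set (EuclideanSpace ℝ (Fin n)))
    (hKclosed : IsClosed K) (hKconvex : Convex ℝ K)
    (hKcone : ∀ c : ℝ, 0 < c → ∀ u ∈ K, c • u ∈ K)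
    (ψ : EuclideanSpace ℝ (Fin n) → ℝ)
    (hψ : ConcaveOn ℝ Set.univ ψ)
    (hassum : Assumption1 K ψ)
    (v : ℕ → EuclideanSpace ℝ (Fin n))
    (hv : ∀ t < m, v t ∈ K)
    (u : ℕ → EuclideanSpace ℝ (Fin n))
    (hu : ∀ t, u t = ∑ s ∈ Finset.range t, v s)
    (y : ℕ → EuclideanSpace ℝ (Fin n))
    (hy : ∀ t < m, IsSupergradient ψ (u (t + 1)) (y t))
    (ylast : EuclideanSpace ℝ (Fin n))
    (hylast : IsSupergradient ψ (u m) ylast)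
    (hylastmin : ∀ z, IsSupergradient ψ (u m) z → z - ylast ∈ dualCone K) :
    ∀ t < m, y t - ylast ∈ dualCone K ∧
      ∀ (A : EuclideanSpace ℝ (Fin k) →ₗ[ℝ] EuclideanSpace ℝ (Fin n))
        (x : EuclideanSpace ℝ (Fin k)), A x ∈ K →
          ⟪A x, ylast⟫ ≤ ⟪A x, y t⟫ := by

  intro t ht
  -- 0 ∈ K
  have hm : 0 < m := Nat.lt_of_lt_of_le (Nat.zero_lt_succ t) ht
  have hv0 : v 0 ∈ K := hv 0 hm
  have h0K : (0 : EuclideanSpace ℝ (Fin n)) ∈ K := by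
    have htend : Filter.Tendsto (fun i : ℕ => (1 / ((i : ℝ) + 1)) • v 0)
        Filter.atTop (nhds 0) := by
      have := (tendsto_one_div_add_atTop_nhds_zero_nat (𝕜 := ℝ)).smul_const (v 0)
      simpa using this
    exact hKclosed.mem_of_tendsto htend
      (Filter.Eventually.of_forall fun i =>
        hKcone _ (by positivity) _ hv0)
  -- K closed under addition
  have haddK : ∀ a ∈ K, ∀ b ∈ K, a + b ∈ K := by
    intro a ha b hb
    have h2 : ((1:ℝ)/2) • a + ((1:ℝ)/2) • b ∈ K :=
      hKconvex ha hb (by norm_num) (by norm_num) (by norm_num)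
    have := hKcone 2 (by norm_num) _ h2
    simpa [smul_add, smul_smul] using this
  -- partial sums in K
  have hsumK : ∀ s : Finset ℕ, (∀ i ∈ s, i < m) → (∑ i ∈ s, v i) ∈ K := by
    intro s hs
    exact Finset.sum_induction v (· ∈ K) (fun a b ha hb => haddK a ha b hb) h0K
      (fun i hi => hv i (hs i hi))
  have huK : ∀ j ≤ m, u j ∈ K := by
    intro j hj
    rw [hu]
    exact hsumK _ (fun i hi => lt_of_lt_of_le (Finset.mem_range.mp hi) hj)
  have hdiff : u m - u (t + 1) ∈ K := by
    have : u m - u (t + 1) = ∑ i ∈ Finset.Ico (t + 1) m, v i := by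
      rw [hu, hu, Finset.sum_Ico_eq_sub _ ht]
    rw [this]
    exact hsumK _ (fun i hi => (Finset.mem_Ico.mp hi).2)
  obtain ⟨y', hy', hmin'⟩ := hassum (u m) (huK m le_rfl) (u (t + 1)) (huK _ ht) hdiff
  have h1 : y t - y' ∈ dualCone K := hmin' (y t) (hy t ht)
  have h2 : y' - ylast ∈ dualCone K := hylastmin y' hy'
  have hmem : y t - ylast ∈ dualCone K := by
    intro w hw
    have := add_nonneg (h1 w hw) (h2 w hw)
    rw [← inner_add_left] at this
    simpa using this
  refine ⟨hmem, fun A x hx => ?_⟩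
  have := hmem (A x) hx
  rw [inner_sub_left] at this
  have hsymm : ∀ a b : EuclideanSpace ℝ (Fin n), ⟪a, b⟫ = ⟪b, a⟫ :=
    fun a b => (real_inner_comm b a)
  rw [hsymm (y t) (A x), hsymm ylast (A x)] at this
  linarith
end

section
/- (Lower bound on the optimal dual variable of the online LP.) Let m, n, k ≥ 1. For t ∈ {1,…,m} let c_t ∈ ℝᵏ and let B_t be a real n×k matrix with all entries nonnegative. Let l > 0 satisfy (c_t)_j < l·(B_t)_{ij} for every t, i, j with (B_t)_{ij} > 0. Let Δ = {x ∈ ℝᵏ : x_j ≥ 0 for all j, ∑_j x_j ≤ 1}. Suppose y ∈ ℝⁿ with y_i ≤ 0 for all i, and x_t ∈ Δ for all t, satisfy: (i) ⟨x_t, c_t + B_tᵀ y⟩ ≥ ⟨x, c_t + B_tᵀ y⟩ for all x ∈ Δ and all t; and (ii) for every i, if y_i < 0 then (∑_{t=1}^m B_t x_t)_i = 1. Then y_i > −l for every i ∈ {1,…,n}. -/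
/-- Lower bound on the optimal dual variable of the online LP:
under primal optimality (i) and complementary slackness (ii),
`yᵢ > −l` for every `i`. -/
theorem stmt_11 {m n k : ℕ} (hm : 1 ≤ m) (hn : 1 ≤ n) (hk : 1 ≤ k)
    (c : Fin m → Fin k → ℝ) (B : Fin m → Matrix (Fin n) (Fin k) ℝ)
    (hB : ∀ t i j, 0 ≤ B t i j)
    (l : ℝ) (hl : 0 < l)
    (hlc : ∀ t i j, 0 < B t i j → c t j < l * B t i j)
    (y : Fin n → ℝ) (hy : ∀ i, y i ≤ 0)
    (x : Fin m → Fin k → ℝ)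
    (hx : ∀ t, (∀ j, 0 ≤ x t j) ∧ (∑ j, x t j) ≤ 1)
    (hopt : ∀ t, ∀ x' : Fin k → ℝ, (∀ j, 0 ≤ x' j) → (∑ j, x' j) ≤ 1 →
      (∑ j, x' j * (c t j + ((B t).transpose.mulVec y) j)) ≤
        ∑ j, x t j * (c t j + ((B t).transpose.mulVec y) j))
    (hcs : ∀ i, y i < 0 → (∑ t, (B t).mulVec (x t)) i = 1) :
    ∀ i, -l < y i := by
  intro i
  by_contra h
  push_neg at h
  have hyi : y i < 0 := lt_of_le_of_lt h (by linarith)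
  have hsum := hcs i hyi
  rw [Finset.sum_apply] at hsum
  have hpos : ∃ t, 0 < (B t).mulVec (x t) i := by
    by_contra hc
    push_neg at hc
    have : (∑ t, (B t).mulVec (x t) i) ≤ 0 :=
      Finset.sum_nonpos (fun t _ => hc t)
    linarith
  obtain ⟨t, ht⟩ := hpos
  rw [Matrix.mulVec, dotProduct] at ht
  have hposj : ∃ j, 0 < B t i j * x t j := by
    by_contra hc
    push_neg at hc
    have : (∑ j, B t i j * x t j) ≤ 0 := Finset.sum_nonpos (fun j _ => hc j)
    linarith
  obtain ⟨j, hj⟩ := hposj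
  have hBpos : 0 < B t i j := by
    rcases (hB t i j).lt_or_eq with h' | h'
    · exact h'
    · exfalso; rw [← h'] at hj; simpa using hj
  have hxpos : 0 < x t j := by
    nlinarith [(hx t).1 j, hB t i j]
  set coef : Fin k → ℝ := fun j' => c t j' + ((B t).transpose.mulVec y) j' with hcoefdef
  have hcoef : coef j < 0 := by
    have hT : ((B t).transpose.mulVec y) j = ∑ i', B t i' j * y i' := by
      simp [Matrix.mulVec, dotProduct, Matrix.transpose_apply]
    have hbound : (∑ i', B t i' j * y i') ≤ B t i j * y i := by
      have hle : ∀ i' ∈ Finset.univ, B t i' j * y i' ≤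
          if i' = i then B t i j * y i else 0 := by
        intro i' _
        by_cases hii : i' = i
        · simp [hii]
        · simp only [hii, if_false]
          exact mul_nonpos_of_nonneg_of_nonpos (hB t i' j) (hy i')
      calc (∑ i', B t i' j * y i')
          ≤ ∑ i', if i' = i then B t i j * y i else 0 := Finset.sum_le_sum hle
        _ = B t i j * y i := by simp
    have h2 : B t i j * y i ≤ B t i j * (-l) :=
      mul_le_mul_of_nonneg_left h (hB t i j)
    have h3 := hlc t i j hBpos
    simp only [hcoefdef]
    rw [hT]
    nlinarith
  set x' : Fin k → ℝ := fun j' => if j' = j then 0 else x t j' with hx'def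
  have hx'nonneg : ∀ j', 0 ≤ x' j' := by
    intro j'
    simp only [hx'def]
    by_cases hjj : j' = j
    · simp [hjj]
    · simp [hjj]; exact (hx t).1 j'
  have hx'sum : (∑ j', x' j') ≤ 1 := by
    have : (∑ j', x' j') ≤ ∑ j', x t j' := by
      apply Finset.sum_le_sum
      intro j' _
      simp only [hx'def]
      by_cases hjj : j' = j
      · simp [hjj]; exact (hx t).1 j
      · simp [hjj]
    linarith [(hx t).2]
  have hineq := hopt t x' hx'nonneg hx'sum
  have hdiff : (∑ j', x t j' * coef j') - (∑ j', x' j' * coef j')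
      = x t j * coef j := by
    rw [← Finset.sum_sub_distrib]
    have : ∀ j', x t j' * coef j' - x' j' * coef j'
        = if j' = j then x t j * coef j else 0 := by
      intro j'
      simp only [hx'def]
      by_cases hjj : j' = j
      · simp [hjj]
      · simp [hjj]
    simp only [this]
    simp
  have hneg : x t j * coef j < 0 := mul_neg_of_pos_of_neg hxpos hcoef
  simp only [hcoefdef] at hdiff hneg
  linarith
end

section
/- Fix a real number p ≥ 1 and n ≥ 1, let B_p = {v ∈ ℝⁿ : ∑_{i=1}^n |v_i|^p ≤ 1}, and define G : ℝⁿ → ℝ by G(u) = −inf{∑_i |u_i − v_i| : v ∈ B_p}. Then G is concave, and G satisfies Assumption 1 on the cone ℝ₊ⁿ: whenever u, v ∈ ℝⁿ with 0 ≤ v_i ≤ u_i for all i, there exists a supergradient y of G at u such that z − y ∈ ℝ₊ⁿ (i.e., z_i ≥ y_i for all i) for every supergradient z of G at v. -/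
open RealInnerProductSpace

section Stmt12Aux
open Finset Real

noncomputable def fd (n : ℕ) (p : ℝ) (x : EuclideanSpace ℝ (Fin n)) : ℝ :=
  sInf {d : ℝ | ∃ v : EuclideanSpace ℝ (Fin n),
      (∑ i, |v i| ^ p) ≤ 1 ∧ d = ∑ i, |x i - v i|}

variable {n : ℕ} {p : ℝ}

example : EuclideanSpace ℝ (Fin 2) := WithLp.toLp 2 (fun _ => (0:ℝ))

lemma S_nonempty (hp : 1 ≤ p) (x : EuclideanSpace ℝ (Fin n)) :
    {d : ℝ | ∃ v : EuclideanSpace ℝ (Fin n),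
      (∑ i, |v i| ^ p) ≤ 1 ∧ d = ∑ i, |x i - v i|}.Nonempty := by
  refine ⟨∑ i, |x i - (0:ℝ)|, WithLp.toLp 2 (fun _ => (0:ℝ)), ?_, rfl⟩
  simp only [WithLp.ofLp_toLp]
  have : ∀ i : Fin n, |(0:ℝ)| ^ p = 0 := by
    intro i; rw [abs_zero, Real.zero_rpow (by positivity)]
  rw [Finset.sum_congr rfl fun i _ => this i]; simp

lemma S_bdd (x : EuclideanSpace ℝ (Fin n)) :
    BddBelow {d : ℝ | ∃ v : EuclideanSpace ℝ (Fin n),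
      (∑ i, |v i| ^ p) ≤ 1 ∧ d = ∑ i, |x i - v i|} := by
  refine ⟨0, fun d hd => ?_⟩
  obtain ⟨v, -, rfl⟩ := hd
  positivity

lemma fd_le (x v : EuclideanSpace ℝ (Fin n)) (hv : (∑ i, |v i| ^ p) ≤ 1) :
    fd n p x ≤ ∑ i, |x i - v i| :=
  csInf_le (S_bdd x) ⟨v, hv, rfl⟩

lemma le_fd (hp : 1 ≤ p) (x : EuclideanSpace ℝ (Fin n)) {c : ℝ}
    (h : ∀ v : EuclideanSpace ℝ (Fin n), (∑ i, |v i| ^ p) ≤ 1 → c ≤ ∑ i, |x i - v i|) :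
    c ≤ fd n p x := by
  refine le_csInf (S_nonempty hp x) ?_
  rintro d ⟨v, hv, rfl⟩; exact h v hv

lemma fd_nonneg (hp : 1 ≤ p) (x : EuclideanSpace ℝ (Fin n)) : 0 ≤ fd n p x :=
  le_fd hp x fun v _ => by positivity

variable {p : ℝ}

lemma rpow_diff_le (hp : 1 ≤ p) {a b : ℝ} (hb : 0 ≤ b) (hab : b ≤ a) :
    a ^ p - b ^ p ≤ p * a ^ (p - 1) * (a - b) := by
  rcases eq_or_lt_of_le hp with rfl | hp1
  · simp [Real.rpow_one]
  have ha : 0 ≤ a := hb.trans hab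
  rcases eq_or_lt_of_le ha with h | ha'
  · have hb0 : b = 0 := le_antisymm (hab.trans h.symm.le) hb
    simp [← h, hb0]
  have hane : a ≠ 0 := ha'.ne'
  have hs : -1 ≤ b / a - 1 := by
    have : 0 ≤ b / a := div_nonneg hb ha; linarith
  have key := one_add_mul_self_le_rpow_one_add hs hp
  have h1 : 1 + (b / a - 1) = b / a := by ring
  rw [h1, Real.div_rpow hb ha] at key
  have hap : 0 < a ^ p := Real.rpow_pos_of_pos ha' p
  have hpa : a ^ (p - 1) * a = a ^ p := by
    rw [← Real.rpow_add_one hane (p - 1)]; ring_nf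
  have key2 : (1 + p * (b / a - 1)) * a ^ p ≤ b ^ p := by
    calc (1 + p * (b / a - 1)) * a ^ p ≤ (b ^ p / a ^ p) * a ^ p :=
          mul_le_mul_of_nonneg_right key hap.le
      _ = b ^ p := by field_simp
  have expand : (1 + p * (b / a - 1)) * a ^ p = a ^ p + p * a ^ (p - 1) * (b - a) := by
    rw [← hpa]; field_simp
  rw [expand] at key2
  have : p * a ^ (p - 1) * (a - b) = -(p * a ^ (p - 1) * (b - a)) := by ring
  linarith

lemma le_rpow_diff (hp : 1 ≤ p) {a b : ℝ} (hb : 0 ≤ b) (hab : b ≤ a) :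
    p * b ^ (p - 1) * (a - b) ≤ a ^ p - b ^ p := by
  rcases eq_or_lt_of_le hp with rfl | hp1
  · simp [Real.rpow_one]
  have ha : 0 ≤ a := hb.trans hab
  rcases eq_or_lt_of_le hb with h | hb'
  · rw [← h, Real.zero_rpow (by linarith : p - 1 ≠ 0), Real.zero_rpow (by linarith : p ≠ 0)]
    simpa using Real.rpow_nonneg ha p
  have hbne : b ≠ 0 := hb'.ne'
  have hs : -1 ≤ a / b - 1 := by
    have : 0 ≤ a / b := div_nonneg ha hb; linarith
  have key := one_add_mul_self_le_rpow_one_add hs hp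
  have h1 : 1 + (a / b - 1) = a / b := by ring
  rw [h1, Real.div_rpow ha hb] at key
  have hbp : 0 < b ^ p := Real.rpow_pos_of_pos hb' p
  have hpb : b ^ (p - 1) * b = b ^ p := by
    rw [← Real.rpow_add_one hbne (p - 1)]; ring_nf
  have key2 : (1 + p * (a / b - 1)) * b ^ p ≤ a ^ p := by
    calc (1 + p * (a / b - 1)) * b ^ p ≤ (a ^ p / b ^ p) * b ^ p :=
          mul_le_mul_of_nonneg_right key hbp.le
      _ = a ^ p := by field_simp
  have expand : (1 + p * (a / b - 1)) * b ^ p = b ^ p + p * b ^ (p - 1) * (a - b) := by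
    rw [← hpb]; field_simp
  rw [expand] at key2; linarith

lemma young_ineq (hp : 1 ≤ p) {a b : ℝ} (ha : 0 ≤ a) (hb : 0 ≤ b) :
    a ^ (p - 1) * b ≤ (1 - 1/p) * a ^ p + (1/p) * b ^ p := by
  have hp0 : (0:ℝ) < p := lt_of_lt_of_le one_pos hp
  have h := Real.geom_mean_le_arith_mean2_weighted
      (w₁ := 1 - 1/p) (w₂ := 1/p) (p₁ := a ^ p) (p₂ := b ^ p)
      (by rw [sub_nonneg, div_le_one hp0]; exact hp) (by positivity)
      (Real.rpow_nonneg ha p) (Real.rpow_nonneg hb p) (by ring)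
  have h1 : (a ^ p) ^ (1 - 1/p) = a ^ (p - 1) := by
    rw [← Real.rpow_mul ha]; congr 1; field_simp
  have h2 : (b ^ p) ^ (1/p : ℝ) = b := by
    rw [← Real.rpow_mul hb, mul_one_div, div_self hp0.ne', Real.rpow_one]
  rw [h1, h2] at h; exact h

lemma fd_lip (hp : 1 ≤ p) (x x' : EuclideanSpace ℝ (Fin n)) :
    fd n p x' ≤ fd n p x + ∑ i, |x' i - x i| := by
  have h : fd n p x' - ∑ i, |x' i - x i| ≤ fd n p x := by
    apply le_fd hp
    intro v hv
    have h1 := fd_le x' v hv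
    have tri : ∑ i, |x' i - v i| ≤ ∑ i, |x i - v i| + ∑ i, |x' i - x i| := by
      rw [← Finset.sum_add_distrib]
      apply Finset.sum_le_sum; intro i _
      calc |x' i - v i| = |(x i - v i) + (x' i - x i)| := by congr 1; ring
        _ ≤ |x i - v i| + |x' i - x i| := abs_add_le _ _
    linarith
  linarith

section wt

variable {n : ℕ} (hp : 1 ≤ p) (a : Fin n → ℝ) (σ : ℝ)

/-- the dual weight -/
noncomputable def wt (i : Fin n) : ℝ := (min (a i) σ / σ) ^ (p - 1)

variable {a σ}

lemma wt_nonneg (ha : ∀ i, 0 ≤ a i) (hσ : 0 < σ) (i : Fin n) : 0 ≤ wt (p := p) a σ i :=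
  Real.rpow_nonneg (div_nonneg (le_min (ha i) hσ.le) hσ.le) _

lemma wt_le_one (hp : 1 ≤ p) (ha : ∀ i, 0 ≤ a i) (hσ : 0 < σ) (i : Fin n) :
    wt (p := p) a σ i ≤ 1 :=
  Real.rpow_le_one (div_nonneg (le_min (ha i) hσ.le) hσ.le)
    (div_le_one_of_le₀ (min_le_right _ _) hσ.le) (by linarith)

lemma wt_mul_min (hp : 1 ≤ p) (ha : ∀ i, 0 ≤ a i) (hσ : 0 < σ) (i : Fin n) :
    wt (p := p) a σ i * min (a i) σ = σ ^ (1 - p) * min (a i) σ ^ p := by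
  set m := min (a i) σ with hm
  have hm0 : 0 ≤ m := le_min (ha i) hσ.le
  rcases eq_or_lt_of_le hm0 with h | hmpos
  · rw [← h, Real.zero_rpow (by linarith : p ≠ 0), mul_zero, mul_zero]
  · have : wt (p := p) a σ i = m ^ (p-1) * σ ^ (1-p) := by
      rw [wt, ← hm, Real.div_rpow hm0 hσ.le, div_eq_mul_inv, ← Real.rpow_neg hσ.le]
      ring_nf
    rw [this]
    have h2 : m ^ (p-1) * m = m ^ p := by
      rw [← Real.rpow_add_one hmpos.ne' (p-1)]; ring_nf
    calc m ^ (p-1) * σ ^ (1-p) * m = (m ^ (p-1) * m) * σ ^ (1-p) := by ring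
      _ = σ ^ (1-p) * m ^ p := by rw [h2]; ring

lemma sum_wt_min (hp : 1 ≤ p) (ha : ∀ i, 0 ≤ a i) (hσ : 0 < σ)
    (hsum : ∑ i, min (a i) σ ^ p = 1) :
    ∑ i, wt (p := p) a σ i * min (a i) σ = σ ^ (1 - p) := by
  rw [Finset.sum_congr rfl fun i _ => wt_mul_min hp ha hσ i, ← Finset.mul_sum, hsum, mul_one]

lemma wt_weak (hp : 1 ≤ p) (ha : ∀ i, 0 ≤ a i) (hσ : 0 < σ)
    (hsum : ∑ i, min (a i) σ ^ p = 1) (x : EuclideanSpace ℝ (Fin n)) :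
    ∑ i, wt (p := p) a σ i * x i - σ ^ (1 - p) ≤ fd n p x := by
  apply le_fd hp
  intro v hv
  have key1 : ∑ i, wt (p := p) a σ i * (x i - v i) ≤ ∑ i, |x i - v i| := by
    apply Finset.sum_le_sum; intro i _
    calc wt (p := p) a σ i * (x i - v i) ≤ |wt (p := p) a σ i * (x i - v i)| := le_abs_self _
      _ = wt (p := p) a σ i * |x i - v i| := by
          rw [abs_mul, abs_of_nonneg (wt_nonneg ha hσ i)]
      _ ≤ 1 * |x i - v i| := by
          apply mul_le_mul_of_nonneg_right (wt_le_one hp ha hσ i) (abs_nonneg _)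
      _ = |x i - v i| := one_mul _
  have key2 : ∑ i, wt (p := p) a σ i * v i ≤ σ ^ (1 - p) := by
    have hσ1p : (0:ℝ) < σ ^ (1-p) := Real.rpow_pos_of_pos hσ _
    have term : ∀ i : Fin n, wt (p := p) a σ i * v i ≤
        σ ^ (1-p) * ((1 - 1/p) * min (a i) σ ^ p + (1/p) * |v i| ^ p) := by
      intro i
      set m := min (a i) σ with hm
      have hm0 : 0 ≤ m := le_min (ha i) hσ.le
      have hwt : wt (p := p) a σ i = m ^ (p-1) * σ ^ (1-p) := by
        rcases eq_or_lt_of_le hm0 with h | hmpos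
        · rcases eq_or_lt_of_le hp with rfl | hp1
          · norm_num [wt, ← hm, ← h]
          · rw [wt, ← hm, ← h, zero_div,
              Real.zero_rpow (ne_of_gt (by linarith : (0:ℝ) < p - 1))]
            simp
        · rw [wt, ← hm, Real.div_rpow hm0 hσ.le, div_eq_mul_inv, ← Real.rpow_neg hσ.le]
          ring_nf
      calc wt (p := p) a σ i * v i ≤ wt (p := p) a σ i * |v i| :=
            mul_le_mul_of_nonneg_left (le_abs_self _) (wt_nonneg ha hσ i)
        _ = σ ^ (1-p) * (m ^ (p-1) * |v i|) := by rw [hwt]; ring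
        _ ≤ σ ^ (1-p) * ((1 - 1/p) * m ^ p + (1/p) * |v i| ^ p) := by
            apply mul_le_mul_of_nonneg_left (young_ineq hp hm0 (abs_nonneg _)) hσ1p.le
    calc ∑ i, wt (p := p) a σ i * v i
        ≤ ∑ i, σ ^ (1-p) * ((1 - 1/p) * min (a i) σ ^ p + (1/p) * |v i| ^ p) :=
          Finset.sum_le_sum fun i _ => term i
      _ = σ ^ (1-p) * ((1 - 1/p) * ∑ i, min (a i) σ ^ p + (1/p) * ∑ i, |v i| ^ p) := by
          rw [← Finset.mul_sum]; congr 1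
          rw [Finset.sum_add_distrib, ← Finset.mul_sum, ← Finset.mul_sum]
      _ ≤ σ ^ (1-p) * ((1 - 1/p) * 1 + (1/p) * 1) := by
          apply mul_le_mul_of_nonneg_left _ hσ1p.le
          have hp0 : (0:ℝ) < p := lt_of_lt_of_le one_pos hp
          have w1 : (0:ℝ) ≤ 1 - 1/p := by
            rw [sub_nonneg, div_le_one hp0]; exact hp
          apply add_le_add
          · exact mul_le_mul_of_nonneg_left (le_of_eq hsum) w1
          · exact mul_le_mul_of_nonneg_left hv (by positivity)
      _ = σ ^ (1-p) := by field_simp; ring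
  have final : ∑ i, wt (p := p) a σ i * x i =
      ∑ i, wt (p := p) a σ i * (x i - v i) + ∑ i, wt (p := p) a σ i * v i := by
    rw [← Finset.sum_add_distrib]; congr 1; funext i; ring
  linarith
end wt

section point
variable {n : ℕ} {a : Fin n → ℝ} {σ : ℝ}

lemma wt_abs_sub (hσ : 0 < σ) (i : Fin n) :
    |a i - min (a i) σ| = max (a i - σ) 0 := by
  rcases le_total (a i) σ with h | h
  · rw [min_eq_left h, sub_self, abs_zero, max_eq_right (by linarith)]
  · rw [min_eq_right h, abs_of_nonneg (by linarith), max_eq_left (by linarith)]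

lemma wt_sub_id (hp : 1 ≤ p) (hσ : 0 < σ) (i : Fin n) :
    wt (p := p) a σ i * (a i - min (a i) σ) = max (a i - σ) 0 := by
  rcases le_total (a i) σ with h | h
  · rw [min_eq_left h, sub_self, mul_zero, max_eq_right (by linarith)]
  · rw [min_eq_right h, wt, min_eq_right h, div_self hσ.ne', Real.one_rpow, one_mul,
      max_eq_left (by linarith)]

lemma min_mem_B (hp : 1 ≤ p) (ha : ∀ i, 0 ≤ a i) (hσ : 0 < σ)
    (hsum : ∑ i, min (a i) σ ^ p = 1) :
    (∑ i, |min (a i) σ| ^ p) ≤ (1:ℝ) := by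
  have : ∀ i : Fin n, |min (a i) σ| = min (a i) σ := fun i =>
    abs_of_nonneg (le_min (ha i) hσ.le)
  rw [Finset.sum_congr rfl fun i _ => by rw [this i]]
  exact le_of_eq hsum

lemma fd_eq_dual (hp : 1 ≤ p) (ha : ∀ i, 0 ≤ a i) (hσ : 0 < σ)
    (hsum : ∑ i, min (a i) σ ^ p = 1) :
    fd n p (WithLp.toLp 2 a) = ∑ i, wt (p := p) a σ i * a i - σ ^ (1 - p) ∧
    fd n p (WithLp.toLp 2 a) = ∑ i, max (a i - σ) 0 := by
  have hid : ∑ i, wt (p := p) a σ i * a i - σ ^ (1 - p) = ∑ i, max (a i - σ) 0 := by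
    rw [← sum_wt_min hp ha hσ hsum, ← Finset.sum_sub_distrib]
    apply Finset.sum_congr rfl
    intro i _
    rw [← mul_sub, wt_sub_id hp hσ]
  have hle : fd n p (WithLp.toLp 2 a) ≤ ∑ i, max (a i - σ) 0 := by
    have h1 := fd_le (p := p) (WithLp.toLp 2 a) (WithLp.toLp 2 (fun i => min (a i) σ)) (min_mem_B hp ha hσ hsum)
    calc fd n p (WithLp.toLp 2 a) ≤ ∑ i, |a i - min (a i) σ| := h1
      _ = ∑ i, max (a i - σ) 0 := Finset.sum_congr rfl fun i _ => wt_abs_sub hσ i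
  have hge := wt_weak hp ha hσ hsum (WithLp.toLp 2 a)
  simp only [WithLp.ofLp_toLp] at hge
  constructor
  · linarith [hid ▸ hge, hid ▸ hle]
  · linarith [hid ▸ hge, hid ▸ hle]

lemma fd_subgrad (hp : 1 ≤ p) (ha : ∀ i, 0 ≤ a i) (hσ : 0 < σ)
    (hsum : ∑ i, min (a i) σ ^ p = 1) (x : EuclideanSpace ℝ (Fin n)) :
    fd n p (WithLp.toLp 2 a) + ∑ i, wt (p := p) a σ i * (x i - a i) ≤ fd n p x := by
  have hw := wt_weak hp ha hσ hsum x
  have hd := (fd_eq_dual hp ha hσ hsum).1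
  have : fd n p (WithLp.toLp 2 a) + ∑ i, wt (p := p) a σ i * (x i - a i) =
      ∑ i, wt (p := p) a σ i * x i - σ ^ (1 - p) := by
    rw [hd]
    have : ∑ i, wt (p := p) a σ i * (x i - a i) =
        ∑ i, wt (p := p) a σ i * x i - ∑ i, wt (p := p) a σ i * a i := by
      rw [← Finset.sum_sub_distrib]
      exact Finset.sum_congr rfl fun i _ => by ring
    rw [this]; ring
  linarith

lemma exists_sigma (hp : 1 ≤ p) (ha : ∀ i, 0 ≤ a i) (h1 : 1 ≤ ∑ i, a i ^ p) :
    ∃ σ : ℝ, 0 < σ ∧ (∃ k, σ ≤ a k) ∧ ∑ i, min (a i) σ ^ p = 1 := by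
  have hp0 : (0:ℝ) < p := lt_of_lt_of_le one_pos hp
  have hne : (Finset.univ : Finset (Fin n)).Nonempty := by
    by_contra h
    rw [Finset.not_nonempty_iff_eq_empty] at h
    rw [h, Finset.sum_empty] at h1; linarith
  set M := Finset.univ.sup' hne a with hM
  obtain ⟨k₀, -, hk₀⟩ := Finset.exists_mem_eq_sup' hne a
  have hMle : ∀ i, a i ≤ M := fun i => Finset.le_sup' a (Finset.mem_univ i)
  have hM0 : 0 ≤ M := (ha k₀).trans (le_of_eq hk₀.symm)
  have hcont : ContinuousOn (fun t : ℝ => ∑ i, min (a i) t ^ p) (Set.Icc 0 M) := by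
    apply Continuous.continuousOn
    apply continuous_finset_sum
    intro i _
    exact (Real.continuous_rpow_const hp0.le).comp (continuous_const.min continuous_id)
  have h0 : (fun t : ℝ => ∑ i, min (a i) t ^ p) 0 = 0 := by
    simp only []
    rw [Finset.sum_congr rfl fun i _ => by
      rw [min_eq_right (ha i), Real.zero_rpow hp0.ne']]
    simp
  have hMval : (fun t : ℝ => ∑ i, min (a i) t ^ p) M = ∑ i, a i ^ p := by
    simp only []
    exact Finset.sum_congr rfl fun i _ => by rw [min_eq_left (hMle i)]
  have hmem : (1:ℝ) ∈ Set.Icc ((fun t : ℝ => ∑ i, min (a i) t ^ p) 0)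
      ((fun t : ℝ => ∑ i, min (a i) t ^ p) M) := by
    rw [h0, hMval]; exact ⟨zero_le_one, h1⟩
  obtain ⟨σ, hσmem, hσval⟩ := intermediate_value_Icc hM0 hcont hmem
  refine ⟨σ, ?_, ⟨k₀, hk₀ ▸ hσmem.2⟩, hσval⟩
  rcases eq_or_lt_of_le hσmem.1 with h | h
  · exfalso; rw [← h] at hσval; rw [hσval] at h0; norm_num at h0
  · exact h
end point

section main
open RealInnerProductSpace

variable {n : ℕ}

noncomputable def shiftPt (x : EuclideanSpace ℝ (Fin n)) (i : Fin n) (t : ℝ) :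
    EuclideanSpace ℝ (Fin n) := WithLp.toLp 2 (fun j => if j = i then x j + t else x j)

@[simp] lemma shiftPt_apply (x : EuclideanSpace ℝ (Fin n)) (i j : Fin n) (t : ℝ) :
    shiftPt x i t j = if j = i then x j + t else x j := rfl

lemma fd_exists_near (hp : 1 ≤ p) (x : EuclideanSpace ℝ (Fin n)) {ε : ℝ} (hε : 0 < ε) :
    ∃ v : EuclideanSpace ℝ (Fin n), (∑ i, |v i| ^ p) ≤ 1 ∧
      ∑ i, |x i - v i| < fd n p x + ε := by
  obtain ⟨d, hd, hlt⟩ := Real.lt_sInf_add_pos (S_nonempty hp x) hε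
  obtain ⟨v, hv, rfl⟩ := hd
  exact ⟨v, hv, hlt⟩

lemma inner_shift (z x : EuclideanSpace ℝ (Fin n)) (i : Fin n) (t : ℝ) :
    (inner ℝ z (shiftPt x i t - x) : ℝ) = t * z i := by
  have hc : ∀ j : Fin n, (shiftPt x i t - x) j = if j = i then t else 0 := by
    intro j
    simp only [PiLp.sub_apply, shiftPt_apply]
    by_cases h : j = i <;> simp [h]
  simp only [PiLp.inner_apply, RCLike.inner_apply, conj_trivial]
  rw [Finset.sum_congr rfl fun j _ => by rw [hc j]]
  simp [mul_ite, Finset.sum_ite_eq']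

lemma shift_mem_B (hp : 1 ≤ p) (v : EuclideanSpace ℝ (Fin n)) (hv0 : ∀ j, 0 ≤ v j)
    (hv1 : ∑ j, v j ^ p < 1) (i : Fin n) :
    ∃ t : ℝ, 0 < t ∧ (∑ j, |shiftPt v i t j| ^ p) ≤ 1 := by
  have hp0 : (0:ℝ) < p := lt_of_lt_of_le one_pos hp
  set t := min 1 ((1 - ∑ j, v j ^ p) / (p * (v i + 1) ^ (p - 1))) with hts
  have hd0 : 0 < p * (v i + 1) ^ (p - 1) := by
    have : (0:ℝ) < v i + 1 := by have := hv0 i; linarith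
    positivity
  have ht0 : 0 < t := lt_min one_pos (div_pos (by linarith) hd0)
  have ht1 : t ≤ 1 := min_le_left _ _
  refine ⟨t, ht0, ?_⟩
  have habs : ∀ j : Fin n, |shiftPt v i t j| ^ p = shiftPt v i t j ^ p := by
    intro j
    rw [abs_of_nonneg]
    simp only [shiftPt_apply]
    by_cases h : j = i <;> simp [h]
    · have := hv0 i; linarith
    · exact hv0 j
  rw [Finset.sum_congr rfl fun j _ => habs j]
  have split : ∑ j, shiftPt v i t j ^ p = ∑ j, v j ^ p + ((v i + t) ^ p - v i ^ p) := by
    have hterm : ∀ j : Fin n, shiftPt v i t j ^ p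
        = v j ^ p + (if j = i then (v i + t) ^ p - v i ^ p else 0) := by
      intro j
      simp only [shiftPt_apply]
      by_cases h : j = i
      · subst h; simp only [eq_self_iff_true, if_true]; ring
      · simp [h]
    rw [Finset.sum_congr rfl fun j _ => hterm j, Finset.sum_add_distrib,
      Finset.sum_ite_eq' Finset.univ i fun _ => (v i + t) ^ p - v i ^ p]
    simp
  rw [split]
  have hb1 : (v i + t) ^ p - v i ^ p ≤ p * (v i + t) ^ (p - 1) * t := by
    have := rpow_diff_le hp (hv0 i) (by linarith : v i ≤ v i + t)
    simpa using this
  have hb2 : (v i + t) ^ (p - 1) ≤ (v i + 1) ^ (p - 1) :=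
    Real.rpow_le_rpow (by have := hv0 i; linarith) (by linarith) (by linarith)
  have hb3 : t * (p * (v i + 1) ^ (p - 1)) ≤ 1 - ∑ j, v j ^ p := by
    have hm := min_le_right 1 ((1 - ∑ j, v j ^ p) / (p * (v i + 1) ^ (p - 1)))
    calc t * (p * (v i + 1) ^ (p - 1))
        ≤ ((1 - ∑ j, v j ^ p) / (p * (v i + 1) ^ (p - 1))) * (p * (v i + 1) ^ (p - 1)) :=
          mul_le_mul_of_nonneg_right hm hd0.le
      _ = 1 - ∑ j, v j ^ p := by rw [div_mul_cancel₀ _ hd0.ne']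
  nlinarith [mul_le_mul_of_nonneg_left hb2 (mul_nonneg hp0.le ht0.le)]

lemma z_coord_key (p : ℝ) (G : EuclideanSpace ℝ (Fin n) → ℝ)
    (hGf : ∀ x, G x = -fd n p x) {v z : EuclideanSpace ℝ (Fin n)}
    (hz : IsSupergradient G v z) (i : Fin n) (t : ℝ) :
    fd n p v - fd n p (shiftPt v i t) ≤ t * z i := by
  have h := hz (shiftPt v i t)
  rw [inner_shift z v i t] at h
  simp only [hGf] at h
  linarith

lemma z_nonneg_interior (hp : 1 ≤ p) (G : EuclideanSpace ℝ (Fin n) → ℝ)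
    (hGf : ∀ x, G x = -fd n p x) {v z : EuclideanSpace ℝ (Fin n)}
    (hz : IsSupergradient G v z) (hv0 : ∀ j, 0 ≤ v j)
    (hv1 : ∑ j, v j ^ p < 1) (i : Fin n) : 0 ≤ z i := by
  obtain ⟨t, ht0, htB⟩ := shift_mem_B hp v hv0 hv1 i
  have hkey := z_coord_key p G hGf hz i t
  have hfv : fd n p v = 0 := by
    have h1 : fd n p v ≤ 0 := by
      have := fd_le (p := p) v v (by
        rw [Finset.sum_congr rfl fun j _ => by rw [abs_of_nonneg (hv0 j)]]
        exact hv1.le)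
      simpa using this
    linarith [fd_nonneg hp v]
  have hfv' : fd n p (shiftPt v i t) = 0 := by
    have h1 := fd_le (p := p) (shiftPt v i t) (shiftPt v i t) htB
    have h2 := fd_nonneg hp (shiftPt v i t)
    simpa using le_antisymm (by simpa using h1) h2
  rw [hfv, hfv'] at hkey
  have h3 : (0:ℝ) * t ≤ z i * t := by linarith [hkey]
  exact (mul_le_mul_iff_of_pos_right ht0).mp h3

lemma z_lip (hp : 1 ≤ p) (G : EuclideanSpace ℝ (Fin n) → ℝ)
    (hGf : ∀ x, G x = -fd n p x) {v z : EuclideanSpace ℝ (Fin n)}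
    (hz : IsSupergradient G v z) (i : Fin n) : -1 ≤ z i := by
  have hkey := z_coord_key p G hGf hz i 1
  have hlip := fd_lip hp v (shiftPt v i 1)
  have hsum : ∑ j, |shiftPt v i 1 j - v j| = 1 := by
    have : ∀ j : Fin n, |shiftPt v i 1 j - v j| = if j = i then 1 else 0 := by
      intro j; simp only [shiftPt_apply]
      by_cases h : j = i <;> simp [h]
    rw [Finset.sum_congr rfl fun j _ => this j]
    simp
  rw [hsum] at hlip
  linarith
end main

lemma fd_zero (hp : 1 ≤ p) (x : EuclideanSpace ℝ (Fin n)) (hx0 : ∀ i, 0 ≤ x i)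
    (hx1 : ∑ i, x i ^ p ≤ 1) : fd n p x = 0 := by
  have h1 := fd_le (p := p) x x (by
    rw [Finset.sum_congr rfl fun j _ => by rw [abs_of_nonneg (hx0 j)]]
    exact hx1)
  have h2 := fd_nonneg hp x
  simp only [sub_self, abs_zero, Finset.sum_const_zero] at h1
  linarith

lemma fd_cvx (hp : 1 ≤ p) (x y : EuclideanSpace ℝ (Fin n)) {a b : ℝ}
    (ha : 0 ≤ a) (hb : 0 ≤ b) (hab : a + b = 1) :
    fd n p (a • x + b • y) ≤ a * fd n p x + b * fd n p y := by
  have hp0 : (0:ℝ) < p := lt_of_lt_of_le one_pos hp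
  apply le_of_forall_pos_le_add
  intro ε hε
  obtain ⟨v₁, hB₁, hc₁⟩ := fd_exists_near hp x hε
  obtain ⟨v₂, hB₂, hc₂⟩ := fd_exists_near hp y hε
  have hcoord : ∀ j, (a • v₁ + b • v₂ : EuclideanSpace ℝ (Fin n)) j = a * v₁ j + b * v₂ j := by
    intro j; simp [PiLp.add_apply, PiLp.smul_apply, smul_eq_mul]
  have hmem : (∑ j, |(a • v₁ + b • v₂ : EuclideanSpace ℝ (Fin n)) j| ^ p) ≤ 1 := by
    have hterm : ∀ j : Fin n, |(a • v₁ + b • v₂ : EuclideanSpace ℝ (Fin n)) j| ^ p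
        ≤ a * |v₁ j| ^ p + b * |v₂ j| ^ p := by
      intro j
      rw [hcoord j]
      have h1 : |a * v₁ j + b * v₂ j| ≤ a * |v₁ j| + b * |v₂ j| := by
        calc |a * v₁ j + b * v₂ j| ≤ |a * v₁ j| + |b * v₂ j| := abs_add_le _ _
          _ = a * |v₁ j| + b * |v₂ j| := by
              rw [abs_mul, abs_mul, abs_of_nonneg ha, abs_of_nonneg hb]
      have h2 : |a * v₁ j + b * v₂ j| ^ p ≤ (a * |v₁ j| + b * |v₂ j|) ^ p :=
        Real.rpow_le_rpow (abs_nonneg _) h1 hp0.le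
      have h3 := (convexOn_rpow hp).2 (Set.mem_Ici.mpr (abs_nonneg (v₁ j)))
        (Set.mem_Ici.mpr (abs_nonneg (v₂ j))) ha hb hab
      simp only [smul_eq_mul] at h3
      exact h2.trans h3
    calc ∑ j, |(a • v₁ + b • v₂ : EuclideanSpace ℝ (Fin n)) j| ^ p
        ≤ ∑ j, (a * |v₁ j| ^ p + b * |v₂ j| ^ p) := Finset.sum_le_sum fun j _ => hterm j
      _ = a * ∑ j, |v₁ j| ^ p + b * ∑ j, |v₂ j| ^ p := by
          rw [Finset.sum_add_distrib, ← Finset.mul_sum, ← Finset.mul_sum]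
      _ ≤ a * 1 + b * 1 := add_le_add (mul_le_mul_of_nonneg_left hB₁ ha)
          (mul_le_mul_of_nonneg_left hB₂ hb)
      _ = 1 := by linarith
  have hcost := fd_le (p := p) (a • x + b • y) (a • v₁ + b • v₂) hmem
  have htri : ∑ j, |(a • x + b • y : EuclideanSpace ℝ (Fin n)) j
      - (a • v₁ + b • v₂ : EuclideanSpace ℝ (Fin n)) j|
      ≤ a * ∑ j, |x j - v₁ j| + b * ∑ j, |y j - v₂ j| := by
    rw [Finset.mul_sum, Finset.mul_sum, ← Finset.sum_add_distrib]
    apply Finset.sum_le_sum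
    intro j _
    have e1 : (a • x + b • y : EuclideanSpace ℝ (Fin n)) j
        - (a • v₁ + b • v₂ : EuclideanSpace ℝ (Fin n)) j
        = a * (x j - v₁ j) + b * (y j - v₂ j) := by
      rw [hcoord j]
      simp [PiLp.add_apply, PiLp.smul_apply, smul_eq_mul]
      ring
    rw [e1]
    calc |a * (x j - v₁ j) + b * (y j - v₂ j)|
        ≤ |a * (x j - v₁ j)| + |b * (y j - v₂ j)| := abs_add_le _ _
      _ = a * |x j - v₁ j| + b * |y j - v₂ j| := by
          rw [abs_mul, abs_mul, abs_of_nonneg ha, abs_of_nonneg hb]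
  have hfx : a * ∑ j, |x j - v₁ j| ≤ a * (fd n p x + ε) :=
    mul_le_mul_of_nonneg_left hc₁.le ha
  have hfy : b * ∑ j, |y j - v₂ j| ≤ b * (fd n p y + ε) :=
    mul_le_mul_of_nonneg_left hc₂.le hb
  nlinarith [hcost, htri]

lemma z_bound_main (hp : 1 ≤ p) (hp1 : 1 < p) (G : EuclideanSpace ℝ (Fin n) → ℝ)
    (hGf : ∀ x, G x = -fd n p x) {u v z : EuclideanSpace ℝ (Fin n)}
    (hv0 : ∀ j, 0 ≤ v j) (hvu : ∀ j, v j ≤ u j)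
    (hz : IsSupergradient G v z) (i : Fin n) {τ : ℝ} (hτ0 : 0 < τ)
    (hτk : ∃ k, τ ≤ u k) (hτsum : ∑ j, min (u j) τ ^ p = 1)
    (hui : u i < τ) (h1v : 1 ≤ ∑ j, v j ^ p) :
    -((u i / τ) ^ (p - 1)) ≤ z i := by
  have hp0 : (0:ℝ) < p := lt_of_lt_of_le one_pos hp
  have hu0 : ∀ j, 0 ≤ u j := fun j => (hv0 j).trans (hvu j)
  obtain ⟨σ, hσ0, ⟨k, hk⟩, hσsum⟩ := exists_sigma hp hv0 h1v
  -- τ ≤ σ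
  have hτσ : τ ≤ σ := by
    by_contra hcon
    push_neg at hcon
    obtain ⟨k₀, hk₀⟩ := hτk
    have h1 : (1:ℝ) ≤ ∑ j, min (u j) σ ^ p := by
      rw [← hσsum]
      apply Finset.sum_le_sum
      intro j _
      exact Real.rpow_le_rpow (le_min (hv0 j) hσ0.le) (min_le_min (hvu j) le_rfl) hp0.le
    have h2 : ∑ j, min (u j) σ ^ p < ∑ j, min (u j) τ ^ p := by
      apply Finset.sum_lt_sum
      · intro j _
        exact Real.rpow_le_rpow (le_min (hu0 j) hσ0.le) (min_le_min le_rfl hcon.le) hp0.le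
      · refine ⟨k₀, Finset.mem_univ _, ?_⟩
        rw [min_eq_right (hcon.le.trans hk₀), min_eq_right hk₀]
        exact Real.rpow_lt_rpow hσ0.le hcon hp0
    rw [hτsum] at h2
    linarith
  have hviσ : v i < σ := lt_of_le_of_lt (hvu i) (lt_of_lt_of_le hui hτσ)
  have hwvw : (v i / σ) ^ (p - 1) ≤ (u i / τ) ^ (p - 1) := by
    apply Real.rpow_le_rpow (div_nonneg (hv0 i) hσ0.le) _ (by linarith)
    rw [div_le_div_iff₀ hσ0 hτ0]
    exact mul_le_mul (hvu i) hτσ hτ0.le (hu0 i)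
  -- suffices with epsilon
  have hmain : ∀ ε : ℝ, 0 < ε → -((v i / σ) ^ (p - 1)) ≤ z i + ε := by
    intro ε hε
    set J : Finset (Fin n) := Finset.univ.filter (fun j => σ ≤ v j) with hJ
    have hkJ : k ∈ J := by simp [hJ, hk]
    have hiJ : i ∉ J := by simp [hJ, not_le, hviσ]
    have hK0 : (0:ℝ) < (J.card : ℝ) := by
      have := Finset.card_pos.mpr ⟨k, hkJ⟩
      exact_mod_cast this
    obtain ⟨gap, hgap0, hgaple⟩ : ∃ g : ℝ, 0 < g ∧ ∀ j, v j < σ → g ≤ σ - v j := by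
      have hiJc : i ∈ Finset.univ.filter (fun j => v j < σ) := by simp [hviσ]
      refine ⟨(Finset.univ.filter (fun j => v j < σ)).inf' ⟨i, hiJc⟩ (fun j => σ - v j), ?_, ?_⟩
      · apply (Finset.lt_inf'_iff _).mpr
        intro j hj
        rw [Finset.mem_filter] at hj
        linarith [hj.2]
      · intro j hjσ
        exact Finset.inf'_le _ (by simp [hjσ])
    have hcont : ContinuousAt (fun s : ℝ => ((v i + s) / (σ - s)) ^ (p - 1)) 0 := by
      have hbase : ContinuousAt (fun s : ℝ => (v i + s) / (σ - s)) 0 :=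
        ContinuousAt.div (continuousAt_const.add continuousAt_id)
          (continuousAt_const.sub continuousAt_id) (by simpa using hσ0.ne')
      exact (Real.continuousAt_rpow_const _ _ (Or.inr (by linarith))).comp hbase
    obtain ⟨δ, hδ0, hδ⟩ := Metric.continuousAt_iff.mp hcont ε hε
    obtain ⟨s₁, hs₁0, hs₁δ, hs₁gap, hs₁σ⟩ :
        ∃ s₁ : ℝ, 0 < s₁ ∧ s₁ < δ ∧ s₁ ≤ gap ∧ v i + s₁ ≤ σ - s₁ := by
      refine ⟨min (δ / 2) (min gap ((σ - v i) / 2)), ?_, ?_, ?_, ?_⟩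
      · exact lt_min (by linarith) (lt_min hgap0 (by linarith))
      · exact lt_of_le_of_lt (min_le_left _ _) (by linarith)
      · exact le_trans (min_le_right _ _) (min_le_left _ _)
      · have h2 : min (δ / 2) (min gap ((σ - v i) / 2)) ≤ (σ - v i) / 2 :=
          le_trans (min_le_right _ _) (min_le_right _ _)
        linarith
    obtain ⟨ρ, hρeq⟩ : ∃ ρ : ℝ, ρ = σ - s₁ := ⟨_, rfl⟩
    have hρ0 : 0 < ρ := by rw [hρeq]; have := hv0 i; linarith
    have hρp : (0:ℝ) < ρ ^ (p - 1) := Real.rpow_pos_of_pos hρ0 _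
    obtain ⟨D, hDeq⟩ : ∃ D : ℝ, D = (J.card : ℝ) * (p * ρ ^ (p - 1)) := ⟨_, rfl⟩
    have hD0 : 0 < D := by rw [hDeq]; positivity
    have hvs10 : (0:ℝ) < v i + s₁ := by have := hv0 i; linarith
    have hvs1 : (0:ℝ) < (v i + s₁) ^ (p - 1) := Real.rpow_pos_of_pos hvs10 _
    obtain ⟨t, ht0, hts₁, htD⟩ :
        ∃ t : ℝ, 0 < t ∧ t ≤ s₁ ∧ t * (p * (v i + s₁) ^ (p - 1)) ≤ s₁ * D := by
      refine ⟨min s₁ (s₁ * D / (p * (v i + s₁) ^ (p - 1))), lt_min hs₁0 (by positivity),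
        min_le_left _ _, ?_⟩
      have hm := min_le_right s₁ (s₁ * D / (p * (v i + s₁) ^ (p - 1)))
      calc min s₁ (s₁ * D / (p * (v i + s₁) ^ (p - 1))) * (p * (v i + s₁) ^ (p - 1))
          ≤ (s₁ * D / (p * (v i + s₁) ^ (p - 1))) * (p * (v i + s₁) ^ (p - 1)) :=
            mul_le_mul_of_nonneg_right hm (by positivity)
        _ = s₁ * D := by field_simp
    have hnumnn : 0 ≤ (v i + t) ^ p - v i ^ p := by
      have := Real.rpow_le_rpow (hv0 i) (by linarith : v i ≤ v i + t) hp0.le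
      linarith
    have hnum : (v i + t) ^ p - v i ^ p ≤ p * (v i + s₁) ^ (p - 1) * t := by
      have h1 : (v i + t) ^ p - v i ^ p ≤ p * (v i + t) ^ (p - 1) * t := by
        have := rpow_diff_le hp (hv0 i) (by linarith : v i ≤ v i + t)
        simpa using this
      have h2 : (v i + t) ^ (p - 1) ≤ (v i + s₁) ^ (p - 1) :=
        Real.rpow_le_rpow (by have := hv0 i; linarith) (by linarith) (by linarith)
      linarith [h1, mul_le_mul_of_nonneg_left h2 (mul_nonneg hp0.le ht0.le)]
    obtain ⟨δt, hδt0, hδts₁, hbudget⟩ :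
        ∃ d : ℝ, 0 ≤ d ∧ d ≤ s₁ ∧ (v i + t) ^ p - v i ^ p = d * D := by
      refine ⟨((v i + t) ^ p - v i ^ p) / D, div_nonneg hnumnn hD0.le, ?_, by field_simp⟩
      rw [div_le_iff₀ hD0]
      linarith [hnum, htD]
    obtain ⟨x', hx'def⟩ :
        ∃ x' : EuclideanSpace ℝ (Fin n), ∀ j, x' j = min (shiftPt v i t j) (σ - δt) :=
      ⟨WithLp.toLp 2 (fun j => min (shiftPt v i t j) (σ - δt)), fun j => rfl⟩
    have hσδρ : ρ ≤ σ - δt := by rw [hρeq]; linarith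
    have hx'i : x' i = v i + t := by
      rw [hx'def, shiftPt_apply, if_pos rfl]
      apply min_eq_left
      have : ρ = σ - s₁ := hρeq
      linarith
    have hx'J : ∀ j ∈ J, x' j = σ - δt := by
      intro j hj
      have hjσ : σ ≤ v j := by rw [hJ, Finset.mem_filter] at hj; exact hj.2
      have hji : j ≠ i := fun h => hiJ (h ▸ hj)
      rw [hx'def, shiftPt_apply, if_neg hji]
      exact min_eq_right (by linarith)
    have hx'rest : ∀ j, j ∉ J → j ≠ i → x' j = v j := by
      intro j hj hji
      have hjσ : v j < σ := by
        rw [hJ, Finset.mem_filter] at hj; push_neg at hj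
        exact hj (Finset.mem_univ j)
      have := hgaple j hjσ
      rw [hx'def, shiftPt_apply, if_neg hji]
      exact min_eq_left (by linarith)
    have hx'nn : ∀ j, 0 ≤ x' j := by
      intro j
      rw [hx'def]
      apply le_min _ (by linarith)
      rw [shiftPt_apply]
      by_cases h : j = i
      · rw [if_pos h]; have := hv0 j; linarith
      · rw [if_neg h]; exact hv0 j
    -- membership in B
    have hx'B : (∑ j, |x' j| ^ p) ≤ 1 := by
      rw [Finset.sum_congr rfl fun j _ => by rw [abs_of_nonneg (hx'nn j)]]
      have hterm : ∀ j : Fin n, x' j ^ p ≤ min (v j) σ ^ p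
          + (if j = i then ((v i + t) ^ p - v i ^ p) else 0)
          - (if j ∈ J then p * ρ ^ (p - 1) * δt else 0) := by
        intro j
        by_cases hji : j = i
        · subst hji
          rw [hx'i, if_pos rfl, if_neg hiJ, min_eq_left (by linarith : v j ≤ σ)]
          ring_nf
          exact le_refl _
        · by_cases hjJ : j ∈ J
          · have hjσ : σ ≤ v j := by rw [hJ, Finset.mem_filter] at hjJ; exact hjJ.2
            rw [hx'J j hjJ, if_neg hji, if_pos hjJ, min_eq_right hjσ]
            have hb : p * (σ - δt) ^ (p - 1) * δt ≤ σ ^ p - (σ - δt) ^ p := by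
              have := le_rpow_diff hp (by linarith : (0:ℝ) ≤ σ - δt) (by linarith : σ - δt ≤ σ)
              simpa using this
            have hb2 : ρ ^ (p - 1) ≤ (σ - δt) ^ (p - 1) :=
              Real.rpow_le_rpow hρ0.le hσδρ (by linarith)
            linarith [hb, mul_le_mul_of_nonneg_left hb2 (mul_nonneg hp0.le hδt0)]
          · have hjσ : v j < σ := by
              rw [hJ, Finset.mem_filter] at hjJ; push_neg at hjJ
              exact hjJ (Finset.mem_univ j)
            rw [hx'rest j hjJ hji, if_neg hji, if_neg hjJ, min_eq_left hjσ.le]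
            simp
      calc ∑ j, x' j ^ p
          ≤ ∑ j, (min (v j) σ ^ p + (if j = i then ((v i + t) ^ p - v i ^ p) else 0)
              - (if j ∈ J then p * ρ ^ (p - 1) * δt else 0)) :=
            Finset.sum_le_sum fun j _ => hterm j
        _ = (∑ j, min (v j) σ ^ p) + ((v i + t) ^ p - v i ^ p)
              - (J.card : ℝ) * (p * ρ ^ (p - 1) * δt) := by
            rw [Finset.sum_sub_distrib, Finset.sum_add_distrib,
              Finset.sum_ite_eq' Finset.univ i fun _ => (v i + t) ^ p - v i ^ p]
            simp only [Finset.mem_univ, if_true]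
            congr 1
            rw [Finset.sum_ite_mem, Finset.univ_inter, Finset.sum_const, nsmul_eq_mul]
        _ ≤ 1 := by
            rw [hσsum]
            have he : (J.card : ℝ) * (p * ρ ^ (p - 1) * δt) = δt * D := by rw [hDeq]; ring
            rw [he, ← hbudget]
            linarith
    -- cost identity
    have hcost : ∑ j, |shiftPt v i t j - x' j| = (∑ j, max (v j - σ) 0) + (J.card : ℝ) * δt := by
      have hterm : ∀ j : Fin n, |shiftPt v i t j - x' j|
          = max (v j - σ) 0 + (if j ∈ J then δt else 0) := by
        intro j
        by_cases hji : j = i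
        · subst hji
          rw [hx'i, shiftPt_apply, if_pos rfl, if_neg hiJ, sub_self, abs_zero,
            max_eq_right (by linarith : v j - σ ≤ 0)]
          ring
        · by_cases hjJ : j ∈ J
          · have hjσ : σ ≤ v j := by rw [hJ, Finset.mem_filter] at hjJ; exact hjJ.2
            rw [hx'J j hjJ, shiftPt_apply, if_neg hji, if_pos hjJ,
              abs_of_nonneg (by linarith : (0:ℝ) ≤ v j - (σ - δt)),
              max_eq_left (by linarith : (0:ℝ) ≤ v j - σ)]
            ring
          · have hjσ : v j < σ := by
              rw [hJ, Finset.mem_filter] at hjJ; push_neg at hjJ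
              exact hjJ (Finset.mem_univ j)
            rw [hx'rest j hjJ hji, shiftPt_apply, if_neg hji, if_neg hjJ, sub_self, abs_zero,
              max_eq_right (by linarith : v j - σ ≤ 0)]
            ring
      rw [Finset.sum_congr rfl fun j _ => hterm j, Finset.sum_add_distrib]
      congr 1
      rw [Finset.sum_ite_mem, Finset.univ_inter, Finset.sum_const, nsmul_eq_mul]
    have hfv : fd n p v = ∑ j, max (v j - σ) 0 := (fd_eq_dual hp hv0 hσ0 hσsum).2
    have hchain : fd n p (shiftPt v i t) ≤ fd n p v + (J.card : ℝ) * δt := by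
      have h1 := fd_le (p := p) (shiftPt v i t) x' hx'B
      rw [hcost] at h1
      rw [hfv]
      exact h1
    -- bound K δt
    have hKδ : (J.card : ℝ) * δt ≤ t * ((v i / σ) ^ (p - 1) + ε) := by
      have e1 : (J.card : ℝ) * δt * (p * ρ ^ (p - 1)) = (v i + t) ^ p - v i ^ p := by
        rw [hbudget, hDeq]; ring
      have e2 : (J.card : ℝ) * δt * (p * ρ ^ (p - 1)) ≤ p * (v i + s₁) ^ (p - 1) * t :=
        e1 ▸ hnum
      have e3 : (J.card : ℝ) * δt ≤ t * ((v i + s₁) ^ (p - 1) / ρ ^ (p - 1)) := by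
        calc (J.card : ℝ) * δt = ((J.card : ℝ) * δt * (p * ρ ^ (p - 1))) / (p * ρ ^ (p - 1)) := by
              field_simp
          _ ≤ (p * (v i + s₁) ^ (p - 1) * t) / (p * ρ ^ (p - 1)) :=
              (div_le_div_iff_of_pos_right (by positivity)).mpr e2
          _ = t * ((v i + s₁) ^ (p - 1) / ρ ^ (p - 1)) := by
              field_simp
      have e4 : (v i + s₁) ^ (p - 1) / ρ ^ (p - 1) = ((v i + s₁) / ρ) ^ (p - 1) :=
        (Real.div_rpow hvs10.le hρ0.le _).symm
      have e5 : ((v i + s₁) / ρ) ^ (p - 1) ≤ (v i / σ) ^ (p - 1) + ε := by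
        have hd : dist s₁ (0:ℝ) < δ := by
          rw [Real.dist_eq, sub_zero, abs_of_pos hs₁0]; exact hs₁δ
        have h := hδ hd
        rw [Real.dist_eq] at h
        have habs := (abs_lt.mp h).2
        have g0 : ((v i + (0:ℝ)) / (σ - 0)) ^ (p - 1) = (v i / σ) ^ (p - 1) := by norm_num
        rw [g0, ← hρeq] at habs
        linarith
      calc (J.card : ℝ) * δt ≤ t * ((v i + s₁) ^ (p - 1) / ρ ^ (p - 1)) := e3
        _ = t * ((v i + s₁) / ρ) ^ (p - 1) := by rw [e4]
        _ ≤ t * ((v i / σ) ^ (p - 1) + ε) := mul_le_mul_of_nonneg_left e5 ht0.le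
    -- conclude
    have hzkey := z_coord_key p G hGf hz i t
    have h8 : t * (-((v i / σ) ^ (p - 1) + ε)) ≤ t * z i := by
      have expand : t * (-((v i / σ) ^ (p - 1) + ε)) = -(t * ((v i / σ) ^ (p - 1) + ε)) := by ring
      rw [expand]
      linarith [hzkey, hchain, hKδ]
    have h9 := (mul_le_mul_iff_of_pos_left ht0).mp h8
    linarith
  have hfin : -((v i / σ) ^ (p - 1)) ≤ z i := by
    apply le_of_forall_pos_le_add
    intro ε hε
    exact hmain ε hε
  linarith

noncomputable def negPt (w : Fin n → ℝ) : EuclideanSpace ℝ (Fin n) := WithLp.toLp 2 (fun j => -(w j))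

@[simp] lemma negPt_apply (w : Fin n → ℝ) (j : Fin n) : negPt w j = -(w j) := rfl

lemma inner_neg_fun (w : Fin n → ℝ) (x x' : EuclideanSpace ℝ (Fin n)) :
    (inner ℝ (negPt w) (x' - x) : ℝ)
      = -∑ j, w j * (x' j - x j) := by
  simp only [PiLp.inner_apply, RCLike.inner_apply, conj_trivial, PiLp.sub_apply]
  rw [← Finset.sum_neg_distrib]
  apply Finset.sum_congr rfl
  intro j _
  show (x' j - x j) * negPt w j = -(w j * (x' j - x j))
  rw [negPt_apply]
  ring

end Stmt12Aux

/-- `G(u) = −d₁(u, B_p)` is concave and satisfies Assumption 1 on the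
nonnegative orthant (whose dual cone is itself). -/
theorem stmt_12 {n : ℕ} (hn : 1 ≤ n) (p : ℝ) (hp : 1 ≤ p)
    (G : EuclideanSpace ℝ (Fin n) → ℝ)
    (hG : ∀ u, G u = -sInf {d : ℝ | ∃ v : EuclideanSpace ℝ (Fin n),
        (∑ i, |v i| ^ p) ≤ 1 ∧ d = ∑ i, |u i - v i|}) :
    ConcaveOn ℝ Set.univ G ∧
    ∀ u v : EuclideanSpace ℝ (Fin n), (∀ i, 0 ≤ v i) → (∀ i, v i ≤ u i) →
      ∃ y, IsSupergradient G u y ∧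
        ∀ z, IsSupergradient G v z → ∀ i, y i ≤ z i := by
  have hp0 : (0:ℝ) < p := lt_of_lt_of_le one_pos hp
  have hGf : ∀ x, G x = -fd n p x := fun x => hG x
  constructor
  · refine ⟨convex_univ, fun x _ y _ a b ha hb hab => ?_⟩
    simp only [smul_eq_mul, hGf]
    have := fd_cvx hp x y ha hb hab
    linarith
  · intro u v hv0 hvu
    have hu0 : ∀ i, 0 ≤ u i := fun i => (hv0 i).trans (hvu i)
    have hvsum : ∀ {c : ℝ}, (∑ j, u j ^ p) ≤ c → (∑ j, v j ^ p) ≤ c := by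
      intro c hc
      refine le_trans (Finset.sum_le_sum fun j _ => ?_) hc
      exact Real.rpow_le_rpow (hv0 j) (hvu j) hp0.le
    by_cases hcase : (∑ j, u j ^ p) < 1
    · -- interior case : y = 0
      refine ⟨0, ?_, ?_⟩
      · intro u'
        have h0 : (inner ℝ (0 : EuclideanSpace ℝ (Fin n)) (u' - u) : ℝ) = 0 := inner_zero_left _
        rw [h0, hGf, hGf, fd_zero hp u hu0 hcase.le]
        have := fd_nonneg hp u'
        linarith
      · intro z hz i
        have h0 := z_nonneg_interior hp G hGf hz hv0 (lt_of_le_of_lt (by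
          exact Finset.sum_le_sum fun j _ => Real.rpow_le_rpow (hv0 j) (hvu j) hp0.le) hcase) i
        have : (0 : EuclideanSpace ℝ (Fin n)) i = 0 := rfl
        rw [this]
        exact h0
    · push_neg at hcase
      obtain ⟨τ, hτ0, hτk, hτsum⟩ := exists_sigma hp hu0 hcase
      refine ⟨negPt (wt (p := p) u τ), ?_, ?_⟩
      · intro u'
        rw [inner_neg_fun (wt (p := p) u τ) u u', hGf, hGf]
        have := fd_subgrad hp hu0 hτ0 hτsum u'
        linarith
      · intro z hz i
        rw [negPt_apply]
        by_cases hw1 : wt (p := p) u τ i = 1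
        · rw [hw1]
          exact z_lip hp G hGf hz i
        · have hp1 : 1 < p := by
            rcases eq_or_lt_of_le hp with rfl | h
            · exfalso; apply hw1; rw [wt]; norm_num
            · exact h
          have hui : u i < τ := by
            by_contra hcon
            push_neg at hcon
            apply hw1
            rw [wt, min_eq_right hcon, div_self hτ0.ne', Real.one_rpow]
          have hwi : wt (p := p) u τ i = (u i / τ) ^ (p - 1) := by
            rw [wt, min_eq_left hui.le]
          rw [hwi]
          by_cases hv1 : (∑ j, v j ^ p) < 1
          · have h0 := z_nonneg_interior hp G hGf hz hv0 hv1 i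
            have hnn : 0 ≤ (u i / τ) ^ (p - 1) :=
              Real.rpow_nonneg (div_nonneg (hu0 i) hτ0.le) _
            linarith
          · push_neg at hv1
            exact z_bound_main hp hp1 G hGf hv0 hvu hz i hτ0 hτk hτsum hui hv1
end

section
/- (Lemma 2: monotone rearrangement preserves feasibility.) Let ψ : ℝ → ℝ be concave, nondecreasing, with ψ(0) = 0 and ψ(u) > 0 for all u > 0. Let y : ℝ → ℝ be continuous on [0, ∞) and β ∈ ℝ, and suppose the feasibility constraint holds: for all u ≥ 0 and all s ≥ 0, ∫₀ᵘ y(t) dt ≤ β·ψ(u) + y(u)·s − ψ(s) (equivalently, ∫₀ᵘ y − ψ*(y(u)) ≤ β·ψ(u), where ψ*(r) = inf_{s ≥ 0} (r·s − ψ(s))). Define ȳ(u) = min{y(s) : 0 ≤ s ≤ u}. Then ȳ is continuous on [0, ∞) and (ȳ, β) is also feasible: for all u ≥ 0 and all s ≥ 0, ∫₀ᵘ ȳ(t) dt ≤ β·ψ(u) + ȳ(u)·s − ψ(s). -/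
open Set Real MeasureTheory Topology Filter

/-- exp z ≥ z^2/4 for z ≥ 0 -/
lemma aux_exp_sq {z : ℝ} (hz : 0 ≤ z) : z ^ 2 / 4 ≤ Real.exp z := by
  have h1 : z / 2 + 1 ≤ Real.exp (z / 2) := Real.add_one_le_exp _
  have h4 : Real.exp (z / 2) * Real.exp (z / 2) = Real.exp z := by
    rw [← Real.exp_add]; ring_nf
  nlinarith [h1, h4, Real.exp_pos (z/2)]

/-- chord bound for a concave function: for t ≥ u+1,
    ψ t ≤ ψ u + (ψ (u+1) - ψ u) * (t - u). -/
lemma aux_chord {ψ : ℝ → ℝ} (hconc : ConcaveOn ℝ Set.univ ψ)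
    {u t : ℝ} (ht : u + 1 ≤ t) :
    ψ t ≤ ψ u + (ψ (u + 1) - ψ u) * (t - u) := by
  have htu : (1:ℝ) ≤ t - u := by linarith
  have hpos : 0 < t - u := by linarith
  set μ : ℝ := 1 / (t - u) with hμ
  have hμpos : 0 < μ := by positivity
  have hμ1 : μ ≤ 1 := by
    rw [hμ]; rw [div_le_one hpos]; linarith
  have hkey := hconc.2 (mem_univ u) (mem_univ t) (by linarith : (0:ℝ) ≤ 1 - μ)
    hμpos.le (by ring)
  simp only [smul_eq_mul] at hkey
  have hcomb : (1 - μ) * u + μ * t = u + 1 := by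
    have h' : μ * (t - u) = 1 := by rw [hμ]; exact one_div_mul_cancel hpos.ne'
    linear_combination h'
  rw [hcomb] at hkey
  -- ψ t ≤ ψ u + (ψ(u+1) - ψ u)/μ, and 1/μ = t - u
  have h5 : μ * ψ t ≤ ψ (u+1) - ψ u + μ * ψ u := by linarith
  have h6 : ψ t ≤ (ψ (u+1) - ψ u) / μ + ψ u := by
    rw [← mul_le_mul_iff_right₀ hμpos]
    have heq : μ * ((ψ (u+1) - ψ u) / μ + ψ u) = (ψ (u+1) - ψ u) + μ * ψ u := by
      field_simp
    rw [heq]; linarith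
  have h7 : (ψ (u+1) - ψ u) / μ = (ψ (u+1) - ψ u) * (t - u) := by
    rw [hμ]; field_simp
  linarith [h6, h7.le, h7.ge]

set_option maxHeartbeats 2000000 in
/-- Lemma 2: if `(y, β)` is feasible for the smoothing-design problem, then
so is `(ȳ, β)` where `ȳ(u) = min_{0 ≤ s ≤ u} y(s)`; moreover `ȳ` is
continuous on `[0, ∞)`. -/
theorem stmt_13 (ψ : ℝ → ℝ) (hconc : ConcaveOn ℝ Set.univ ψ)
    (hmono : Monotone ψ) (h0 : ψ 0 = 0) (hpos : ∀ u > (0:ℝ), 0 < ψ u)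
    (y : ℝ → ℝ) (hy : ContinuousOn y (Set.Ici 0)) (β : ℝ)
    (hfeas : ∀ u ≥ (0:ℝ), ∀ s ≥ (0:ℝ),
      (∫ t in (0:ℝ)..u, y t) ≤ β * ψ u + y u * s - ψ s)
    (ybar : ℝ → ℝ)
    (hybar : ∀ u, ybar u = sInf (y '' Set.Icc 0 u)) :
    ContinuousOn ybar (Set.Ici 0) ∧
    ∀ u ≥ (0:ℝ), ∀ s ≥ (0:ℝ),
      (∫ t in (0:ℝ)..u, ybar t) ≤ β * ψ u + ybar u * s - ψ s := by
  -- ψ nonneg on [0,∞)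
  have hψnn : ∀ s : ℝ, 0 ≤ s → 0 ≤ ψ s := fun s hs => h0 ▸ hmono hs
  -- interval integrability of y
  have hyint : ∀ a b : ℝ, 0 ≤ a → 0 ≤ b → IntervalIntegrable y volume a b := by
    intro a b ha hb
    apply ContinuousOn.intervalIntegrable
    apply hy.mono
    intro x hx
    rcases le_total a b with h | h
    · rw [uIcc_of_le h] at hx; exact le_trans ha hx.1
    · rw [uIcc_of_ge h] at hx; exact le_trans hb hx.1
  -- y is nonnegative
  have hynn : ∀ t : ℝ, 0 ≤ t → 0 ≤ y t := by
    intro t ht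
    by_contra hneg
    push_neg at hneg
    set D : ℝ := (∫ x in (0:ℝ)..t, y x) - β * ψ t with hD
    set s : ℝ := (min D 0 - 1) / y t with hsdef
    have hs : 0 ≤ s := by
      have hnum : min D 0 - 1 < 0 := by
        have : min D 0 ≤ 0 := min_le_right _ _
        linarith
      exact (div_pos_of_neg_of_neg hnum hneg).le
    have h1 := hfeas t ht s hs
    have h2 : ψ s ≥ 0 := hψnn s hs
    have h3 : y t * s = min D 0 - 1 := by
      rw [hsdef, mul_comm, div_mul_cancel₀ _ (ne_of_lt hneg)]
    have h4 : min D 0 ≤ D := min_le_left _ _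
    rw [h3] at h1
    simp only [hD] at h4
    linarith
  -- β is nonnegative
  have hβ : 0 ≤ β := by
    by_contra hneg
    push_neg at hneg
    have h1 := hfeas 1 (by norm_num) 0 le_rfl
    rw [h0] at h1
    have h2 : (0:ℝ) ≤ ∫ x in (0:ℝ)..1, y x := by
      apply intervalIntegral.integral_nonneg (by norm_num)
      intro x hx; exact hynn x hx.1
    have h3 : β * ψ 1 < 0 := mul_neg_of_neg_of_pos hneg (hpos 1 one_pos)
    linarith
  -- minimum of y over [0,u] is attained
  have hminex : ∀ u : ℝ, 0 ≤ u → ∃ a ∈ Icc (0:ℝ) u,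
      y a = sInf (y '' Icc 0 u) ∧ ∀ t ∈ Icc (0:ℝ) u, y a ≤ y t := by
    intro u hu
    have hne : (Icc (0:ℝ) u).Nonempty := nonempty_Icc.2 hu
    have hc : ContinuousOn y (Icc 0 u) := hy.mono (fun x hx => hx.1)
    obtain ⟨a, ha, hmin⟩ := isCompact_Icc.exists_isMinOn hne hc
    refine ⟨a, ha, ?_, fun t ht => hmin ht⟩
    apply le_antisymm
    · apply le_csInf ((nonempty_Icc.2 hu).image y)
      rintro b ⟨x, hx, rfl⟩
      exact hmin hx
    · exact csInf_le ⟨y a, by rintro b ⟨x, hx, rfl⟩; exact hmin hx⟩ ⟨a, ha, rfl⟩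
  have hbdd : ∀ u : ℝ, 0 ≤ u → BddBelow (y '' Icc 0 u) := by
    intro u hu
    obtain ⟨a, ha, hval, hmin⟩ := hminex u hu
    exact ⟨y a, by rintro b ⟨x, hx, rfl⟩; exact hmin x hx⟩
  -- ybar ≤ y pointwise
  have hyble : ∀ t : ℝ, 0 ≤ t → ybar t ≤ y t := by
    intro t ht
    rw [hybar t]
    exact csInf_le (hbdd t ht) ⟨t, ⟨ht, le_rfl⟩, rfl⟩
  -- ybar is antitone-ish
  have hanti : ∀ v w : ℝ, 0 ≤ v → v ≤ w → ybar w ≤ ybar v := by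
    intro v w hv hvw
    rw [hybar v, hybar w]
    exact csInf_le_csInf (hbdd w (hv.trans hvw)) ((nonempty_Icc.2 hv).image y)
      (image_mono (Icc_subset_Icc_right hvw))
  -- lower bound of ybar by min
  have hyblow : ∀ u : ℝ, 0 ≤ u → ∀ t ∈ Icc (0:ℝ) u, ybar u ≤ y t := by
    intro u hu t ht
    rw [hybar u]
    exact csInf_le (hbdd u hu) ⟨t, ht, rfl⟩
  -- continuity of ybar
  have hcont : ContinuousOn ybar (Ici 0) := by
    intro u₀ hu₀
    rw [Metric.continuousWithinAt_iff]
    intro ε hε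
    have hyc := hy u₀ hu₀
    rw [Metric.continuousWithinAt_iff] at hyc
    obtain ⟨δ, hδ, hδy⟩ := hyc (ε/3) (by linarith)
    refine ⟨δ, hδ, ?_⟩
    intro v hv hvd
    rw [Real.dist_eq] at hvd ⊢
    have hv0 : (0:ℝ) ≤ v := hv
    have hu0 : (0:ℝ) ≤ u₀ := hu₀
    rcases le_total v u₀ with hle | hle
    · -- v ≤ u₀ : ybar v ≥ ybar u₀
      have h1 : ybar u₀ ≤ ybar v := hanti v u₀ hv0 hle
      obtain ⟨t₂, ht₂, hval₂, hmin₂⟩ := hminex u₀ hu0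
      have ht₂v : ybar u₀ = y t₂ := by rw [hybar u₀, hval₂]
      rcases le_total t₂ v with h2 | h2
      · have : ybar v ≤ y t₂ := hyblow v hv0 t₂ ⟨ht₂.1, h2⟩
        rw [abs_sub_lt_iff]
        constructor <;> [linarith; linarith]
      · -- t₂ ∈ [v, u₀], so |t₂ - u₀| ≤ |v - u₀| < δ
        have ht₂d : |t₂ - u₀| < δ := by
          rw [abs_sub_lt_iff] at hvd ⊢
          constructor
          · linarith [ht₂.2]
          · linarith [hvd.2]
        have ht₂0 : t₂ ∈ Ici (0:ℝ) := ht₂.1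
        have hyd₂ := hδy ht₂0 (by rw [Real.dist_eq]; exact ht₂d)
        have hydv := hδy hv (by rw [Real.dist_eq]; exact hvd)
        rw [Real.dist_eq, abs_sub_lt_iff] at hyd₂ hydv
        have h3 : ybar v ≤ y v := hyble v hv0
        rw [abs_sub_lt_iff]
        constructor
        · -- ybar v - ybar u₀ < ε
          have : ybar v ≤ y v := h3
          have : y v < y u₀ + ε/3 := by linarith [hydv.1]
          have : y u₀ < y t₂ + ε/3 := by linarith [hyd₂.2]
          linarith [hyble v hv0, hydv.1, hyd₂.2, ht₂v.le, ht₂v.ge]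
        · linarith
    · -- u₀ ≤ v : ybar v ≤ ybar u₀
      have h1 : ybar v ≤ ybar u₀ := hanti u₀ v hu0 hle
      obtain ⟨t₁, ht₁, hval₁, hmin₁⟩ := hminex v hv0
      have ht₁v : ybar v = y t₁ := by rw [hybar v, hval₁]
      rcases le_total t₁ u₀ with h2 | h2
      · have : ybar u₀ ≤ y t₁ := hyblow u₀ hu0 t₁ ⟨ht₁.1, h2⟩
        rw [abs_sub_lt_iff]
        constructor <;> [linarith; linarith]
      · have ht₁d : |t₁ - u₀| < δ := by
          rw [abs_sub_lt_iff] at hvd ⊢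
          constructor
          · linarith [ht₁.2, hvd.1]
          · linarith
        have hyd₁ := hδy (le_trans hu0 h2 : t₁ ∈ Ici (0:ℝ)) (by rw [Real.dist_eq]; exact ht₁d)
        rw [Real.dist_eq, abs_sub_lt_iff] at hyd₁
        have h3 : ybar u₀ ≤ y u₀ := hyble u₀ hu0
        rw [abs_sub_lt_iff]
        constructor
        · linarith
        · -- ybar u₀ - ybar v < ε : ybar u₀ ≤ y u₀ < y t₁ + ... = ybar v + ...
          linarith [ht₁v.le, ht₁v.ge, hyd₁.1, hyd₁.2]
  refine ⟨hcont, ?_⟩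
  -- main feasibility
  intro u hu s hs
  set m : ℝ := sInf (y '' Icc 0 u) with hm
  have hmu : ybar u = m := (hybar u).trans hm.symm
  obtain ⟨a₀, ha₀, hval₀, hmin₀⟩ := hminex u hu
  have hya₀ : y a₀ = m := hval₀.trans hm.symm
  have hminm : ∀ t ∈ Icc (0:ℝ) u, m ≤ y t := fun t ht => hya₀ ▸ hmin₀ t ht
  have hybarint : ∀ c d : ℝ, 0 ≤ c → 0 ≤ d → IntervalIntegrable ybar volume c d := by
    intro c d hc hd
    apply ContinuousOn.intervalIntegrable
    apply hcont.mono
    intro x hx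
    rcases le_total c d with h | h
    · rw [uIcc_of_le h] at hx; exact le_trans hc hx.1
    · rw [uIcc_of_ge h] at hx; exact le_trans hd hx.1
  by_cases hcase : y u = m
  · -- minimum attained at u : easy case
    have h1 : (∫ t in (0:ℝ)..u, ybar t) ≤ ∫ t in (0:ℝ)..u, y t :=
      intervalIntegral.integral_mono_on hu (hybarint 0 u le_rfl hu)
        (hyint 0 u le_rfl hu) (fun x hx => hyble x hx.1)
    have h2 := hfeas u hu s hs
    rw [hmu, ← hcase]
    linarith only [h1, h2]
  · -- a = last minimizer on [0,u]
    set A : Set ℝ := Icc (0:ℝ) u ∩ y ⁻¹' {m} with hA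
    have hAne : A.Nonempty := ⟨a₀, ha₀, hya₀⟩
    have hAbdd : BddAbove A := ⟨u, fun t ht => ht.1.2⟩
    have hAclosed : IsClosed A :=
      (hy.mono (fun x (hx : x ∈ Icc (0:ℝ) u) => hx.1)).preimage_isClosed_of_isClosed
        isClosed_Icc isClosed_singleton
    set a : ℝ := sSup A with hadef
    have haA : a ∈ A := hAclosed.csSup_mem hAne hAbdd
    have ha : a ∈ Icc (0:ℝ) u := haA.1
    have hya : y a = m := haA.2
    have hau : a < u := lt_of_le_of_ne ha.2 (fun h => hcase (by rw [← h]; exact hya))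
    have hstrict : ∀ t, a < t → t ≤ u → m < y t := by
      intro t hat htu
      have ht0 : (0:ℝ) ≤ t := le_trans ha.1 hat.le
      refine lt_of_le_of_ne (hminm t ⟨ht0, htu⟩) (fun h => ?_)
      have : t ∈ A := ⟨⟨ht0, htu⟩, h.symm⟩
      exact absurd (le_csSup hAbdd this) (not_le.2 hat)
    -- ybar = m on [a, u]
    have hybm : ∀ t ∈ Icc a u, ybar t = m := by
      intro t ht
      have ht0 : (0:ℝ) ≤ t := le_trans ha.1 ht.1
      rw [hybar t]
      apply le_antisymm
      · exact csInf_le (hbdd t ht0) ⟨a, ⟨ha.1, ht.1⟩, hya⟩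
      · apply le_csInf ((nonempty_Icc.2 ht0).image y)
        rintro b ⟨x, hx, rfl⟩
        exact hminm x ⟨hx.1, le_trans hx.2 ht.2⟩
    -- split the integral
    have hsplit : (∫ t in (0:ℝ)..u, ybar t)
        = (∫ t in (0:ℝ)..a, ybar t) + (u - a) * m := by
      have h1 := intervalIntegral.integral_add_adjacent_intervals
        (hybarint 0 a le_rfl ha.1) (hybarint a u ha.1 hu)
      have h2 : (∫ t in a..u, ybar t) = (u - a) * m := by
        rw [intervalIntegral.integral_congr (g := fun _ => m)
          (fun x hx => hybm x (by rwa [uIcc_of_le hau.le] at hx))]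
        simp [smul_eq_mul]
      rw [← h1, h2]
    have hIa : (∫ t in (0:ℝ)..a, ybar t) ≤ ∫ t in (0:ℝ)..a, y t :=
      intervalIntegral.integral_mono_on ha.1 (hybarint 0 a le_rfl ha.1)
        (hyint 0 a le_rfl ha.1) (fun x hx => hyble x hx.1)
    set Ia : ℝ := ∫ t in (0:ℝ)..a, y t with hIadef
    set C : ℝ := Ia + ψ s - m * s with hC
    -- βψ(a) ≥ C from feasibility at a
    have hCa : C ≤ β * ψ a := by
      have := hfeas a ha.1 s hs
      rw [hya] at this
      simp only [hC]
      linarith only [this]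
    -- key existence of a future point where the linear bound holds
    have hexists : ∃ t, u ≤ t ∧ C + m * (t - a) ≤ β * ψ t := by
      by_contra hno
      push_neg at hno
      -- G t := ∫_a^t y - m (t - a)
      set G : ℝ → ℝ := fun t => (∫ x in a..t, y x) - m * (t - a) with hGdef
      have hGlt : ∀ t, u ≤ t → G t < s * (y t - m) := by
        intro t hut
        have ht0 : (0:ℝ) ≤ t := le_trans hu hut
        have h1 := hfeas t ht0 s hs
        have h2 := hno t hut
        have hadd := intervalIntegral.integral_add_adjacent_intervals
          (hyint 0 a le_rfl ha.1) (hyint a t ha.1 ht0)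
        simp only [hGdef]
        linarith only [h1, h2, hadd, hC, hIadef]
      have hG0 : 0 ≤ G u := by
        have h1 : (u - a) * m ≤ ∫ x in a..u, y x := by
          have := intervalIntegral.integral_mono_on hau.le
            (intervalIntegrable_const (c := m)) (hyint a u ha.1 hu)
            (fun x hx => hminm x ⟨le_trans ha.1 hx.1, hx.2⟩)
          rwa [intervalIntegral.integral_const, smul_eq_mul] at this
        simp only [hGdef]
        linarith only [h1]
      rcases eq_or_lt_of_le hs with hs0 | hspos
      · -- s = 0 : immediate contradiction at t = u
        have := hGlt u le_rfl
        rw [← hs0] at this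
        simp only [zero_mul] at this
        exact absurd this (not_lt.2 hG0)
      -- s > 0 : Gronwall
      have hGu : 0 < G u := by
        have h1 : 0 < ∫ x in a..u, (y x - m) := by
          apply intervalIntegral.intervalIntegral_pos_of_pos_on
          · apply ContinuousOn.intervalIntegrable
            rw [uIcc_of_le hau.le]
            exact (hy.mono (fun x hx => le_trans ha.1 hx.1)).sub continuousOn_const
          · intro x hx
            have := hstrict x hx.1 hx.2.le
            linarith
          · exact hau
        have h2 : (∫ x in a..u, (y x - m))
            = (∫ x in a..u, y x) - (u - a) * m := by
          rw [intervalIntegral.integral_sub (hyint a u ha.1 hu)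
            intervalIntegrable_const, intervalIntegral.integral_const, smul_eq_mul]
        simp only [hGdef]
        linarith only [h1, h2]
      have hu0 : (0:ℝ) < u := lt_of_le_of_lt ha.1 hau
      -- derivative of G
      have hGderiv : ∀ t, u ≤ t → HasDerivAt G (y t - m) t := by
        intro t hut
        have ht0 : (0:ℝ) < t := lt_of_lt_of_le hu0 hut
        have hca : ContinuousAt y t :=
          (hy.mono (fun x (hx : x ∈ Ioi (0:ℝ)) => mem_Ici.2 (le_of_lt hx))).continuousAt
            (Ioi_mem_nhds ht0)
        have hsm : StronglyMeasurableAtFilter y (𝓝 t) volume :=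
          (hy.mono (fun x (hx : x ∈ Ioi (0:ℝ)) => mem_Ici.2 (le_of_lt hx))).stronglyMeasurableAtFilter
            isOpen_Ioi t ht0
        have h1 : HasDerivAt (fun b => ∫ x in a..b, y x) (y t) t :=
          intervalIntegral.integral_hasDerivAt_right (hyint a t ha.1 ht0.le) hsm hca
        have h2 : HasDerivAt (fun b : ℝ => m * (b - a)) m t := by
          simpa using ((hasDerivAt_id t).sub_const a).const_mul m
        exact h1.fun_sub h2
      -- H = G * exp(-(t/s)) is strictly monotone on [u, ∞)
      set H : ℝ → ℝ := fun t => G t * Real.exp (-(t / s)) with hHdef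
      have hHderiv : ∀ t, u ≤ t → HasDerivAt H
          ((y t - m) * Real.exp (-(t / s)) + G t * (Real.exp (-(t / s)) * (-(1 / s)))) t := by
        intro t hut
        have hE : HasDerivAt (fun b : ℝ => Real.exp (-(b / s)))
            (Real.exp (-(t / s)) * (-(1 / s))) t := by
          have h1 : HasDerivAt (fun b : ℝ => -(b / s)) (-(1 / s)) t := by
            simpa using ((hasDerivAt_id' t).div_const s).fun_neg
          exact h1.exp
        exact (hGderiv t hut).mul hE
      have hHmono : StrictMonoOn H (Ici u) := by
        apply strictMonoOn_of_deriv_pos (convex_Ici u)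
        · intro t ht
          exact ((hHderiv t ht).continuousAt).continuousWithinAt
        · intro t ht
          rw [interior_Ici] at ht
          rw [(hHderiv t ht.le).deriv]
          have hE : 0 < Real.exp (-(t / s)) := Real.exp_pos _
          have h1 : G t < s * (y t - m) := hGlt t ht.le
          have h2 : (y t - m) * Real.exp (-(t / s)) + G t * (Real.exp (-(t / s)) * (-(1 / s)))
              = Real.exp (-(t / s)) * ((y t - m) - G t / s) := by
            field_simp
            ring
          rw [h2]
          apply mul_pos hE
          rw [sub_pos, div_lt_iff₀ hspos]
          linarith only [h1]
      have hGgrow : ∀ t, u ≤ t → G u * Real.exp ((t - u) / s) ≤ G t := by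
        intro t hut
        rcases eq_or_lt_of_le hut with rfl | hlt
        · simp
        · have h1 : H u < H t := hHmono (self_mem_Ici) (le_of_lt hlt) hlt
          simp only [hHdef] at h1
          have h2 : 0 < Real.exp (t / s) := Real.exp_pos _
          have h3 : G u * Real.exp (-(u / s)) * Real.exp (t / s)
              ≤ G t * Real.exp (-(t / s)) * Real.exp (t / s) :=
            mul_le_mul_of_nonneg_right h1.le h2.le
          have h4 : Real.exp (-(u / s)) * Real.exp (t / s) = Real.exp ((t - u) / s) := by
            rw [← Real.exp_add]; ring_nf
          have h5 : Real.exp (-(t / s)) * Real.exp (t / s) = 1 := by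
            rw [← Real.exp_add]; simp
          calc G u * Real.exp ((t - u) / s) = G u * (Real.exp (-(u / s)) * Real.exp (t / s)) := by
                rw [h4]
            _ = G u * Real.exp (-(u / s)) * Real.exp (t / s) := by ring
            _ ≤ G t * Real.exp (-(t / s)) * Real.exp (t / s) := h3
            _ = G t * (Real.exp (-(t / s)) * Real.exp (t / s)) := by ring
            _ = G t := by rw [h5, mul_one]
      -- final contradiction via exponential growth vs linear bound
      clear_value A a m Ia C G H
      obtain ⟨k, hk⟩ : ∃ k : ℝ, k = ψ (u + 1) - ψ u := ⟨_, rfl⟩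
      obtain ⟨c₀, hc₀⟩ : ∃ c : ℝ, c = β * ψ u - Ia - m * (u - a) := ⟨_, rfl⟩
      obtain ⟨c₁, hc₁⟩ : ∃ c : ℝ, c = β * k - m := ⟨_, rfl⟩
      obtain ⟨A', hA'⟩ : ∃ A' : ℝ, A' = G u / (4 * s ^ 2) := ⟨_, rfl⟩
      have hA'pos : 0 < A' := by
        rw [hA']
        apply div_pos hGu
        positivity
      obtain ⟨x, hx⟩ : ∃ x : ℝ, x = (|c₀| + |c₁|) / A' + 1 := ⟨_, rfl⟩
      have hq : 0 ≤ (|c₀| + |c₁|) / A' := div_nonneg (by positivity) hA'pos.le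
      have hx1 : (1:ℝ) ≤ x := by rw [hx]; linarith only [hq]
      have hx0 : (0:ℝ) < x := lt_of_lt_of_le one_pos hx1
      obtain ⟨t, ht⟩ : ∃ t : ℝ, t = u + x := ⟨_, rfl⟩
      have htu : u ≤ t := by rw [ht]; linarith only [hx0]
      have ht0 : (0:ℝ) ≤ t := le_trans hu htu
      have htu1 : u + 1 ≤ t := by rw [ht]; linarith only [hx1]
      -- feasibility at t with slack 0
      have hfeas0 : (∫ w in (0:ℝ)..t, y w) ≤ β * ψ t := by
        have := hfeas t ht0 0 le_rfl
        rw [h0] at this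
        linarith only [this]
      have hadd := intervalIntegral.integral_add_adjacent_intervals
        (hyint 0 a le_rfl ha.1) (hyint a t ha.1 ht0)
      have hchord : ψ t ≤ ψ u + k * (t - u) := by
        have := aux_chord hconc htu1
        rw [hk]
        linarith only [this]
      have hβchord : β * ψ t ≤ β * ψ u + β * k * x := by
        have h1 : β * ψ t ≤ β * (ψ u + k * (t - u)) := mul_le_mul_of_nonneg_left hchord hβ
        have h2 : β * (ψ u + k * (t - u)) = β * ψ u + β * k * (t - u) := by ring
        have h3 : t - u = x := by linarith
        rw [h2, h3] at h1
        exact h1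
      have hgrow := hGgrow t htu
      have h2 : (t - u) / s = x / s := by rw [ht]; ring_nf
      rw [h2] at hgrow
      have hexp : x ^ 2 / (4 * s ^ 2) ≤ Real.exp (x / s) := by
        have h3 : (0:ℝ) ≤ x / s := div_nonneg hx0.le hspos.le
        have h4 : (x / s) ^ 2 / 4 = x ^ 2 / (4 * s ^ 2) := by
          rw [div_pow, div_div, mul_comm]
        have h5 := aux_exp_sq h3
        linarith only [h4, h5]
      -- chain it together
      have hGt : A' * x ^ 2 ≤ G t := by
        have h5 : A' * x ^ 2 = G u * (x ^ 2 / (4 * s ^ 2)) := by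
          rw [hA', div_mul_eq_mul_div, mul_div_assoc]
        rw [h5]
        calc G u * (x ^ 2 / (4 * s ^ 2)) ≤ G u * Real.exp (x / s) :=
              mul_le_mul_of_nonneg_left hexp hGu.le
          _ ≤ G t := hgrow
      have hAx : (|c₀| + |c₁|) * x < A' * x ^ 2 := by
        have h6 : |c₀| + |c₁| < A' * x := by
          have h7 : A' * x = |c₀| + |c₁| + A' := by
            rw [hx, mul_add, mul_one, mul_comm, div_mul_cancel₀ _ hA'pos.ne']
          rw [h7]; linarith only [hA'pos]
        have h8 := mul_lt_mul_of_pos_right h6 hx0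
        nlinarith only [h8]
      have hC01 : c₀ + c₁ * x ≤ (|c₀| + |c₁|) * x := by
        have h9 : c₁ * x ≤ |c₁| * x :=
          mul_le_mul_of_nonneg_right (le_abs_self c₁) hx0.le
        have h10 : |c₀| ≤ |c₀| * x := le_mul_of_one_le_right (abs_nonneg c₀) hx1
        have h11 : c₀ ≤ |c₀| := le_abs_self c₀
        linarith only [h9, h10, h11]
      -- combine
      have hItG : (∫ w in (0:ℝ)..t, y w) = Ia + (G t + m * (t - a)) := by
        simp only [hGdef, hIadef]
        rw [← hadd]
        ring
      have hmta : m * (t - a) = m * (u - a) + m * x := by rw [ht]; ring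
      have e4 : c₁ * x = β * k * x - m * x := by rw [hc₁]; ring
      have hGtlow : c₀ + c₁ * x < G t := by linarith only [hGt, hAx, hC01]
      -- now the contradiction
      have hfin : β * ψ u + β * k * x < β * ψ u + β * k * x := by
        have h12 : Ia + (G t + m * (t - a)) ≤ β * ψ u + β * k * x := by
          linarith only [hfeas0, hβchord, hItG]
        have h13 : β * ψ u + β * k * x < Ia + (G t + m * (t - a)) := by
          have := hGtlow
          rw [hc₀] at this
          linarith only [hmta, e4, this]
        linarith only [h12, h13]
      exact absurd hfin (lt_irrefl _)
    obtain ⟨t', ht'u, hP⟩ := hexists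
    clear_value A a m Ia C
    -- concavity interpolation between a and t'
    have hat' : a < t' := lt_of_lt_of_le hau ht'u
    have hfinal : C + m * (u - a) ≤ β * ψ u := by
      set μ : ℝ := (u - a) / (t' - a) with hμdef
      set l : ℝ := (t' - u) / (t' - a) with hldef
      have hden : (0:ℝ) < t' - a := by linarith
      have hμ0 : 0 ≤ μ := div_nonneg (by linarith) hden.le
      have hl0 : 0 ≤ l := div_nonneg (by linarith) hden.le
      have hsum : l + μ = 1 := by
        rw [hμdef, hldef, ← add_div, div_eq_one_iff_eq hden.ne']
        ring
      have hkey := hconc.2 (mem_univ a) (mem_univ t') hl0 hμ0 hsum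
      simp only [smul_eq_mul] at hkey
      have hcomb : l * a + μ * t' = u := by
        rw [hμdef, hldef]
        field_simp
        ring
      rw [hcomb] at hkey
      have hμeq : μ * (t' - a) = u - a := by
        rw [hμdef]; field_simp
      have h1 : l * C ≤ l * (β * ψ a) := mul_le_mul_of_nonneg_left hCa hl0
      have h2 : μ * (C + m * (t' - a)) ≤ μ * (β * ψ t') := mul_le_mul_of_nonneg_left hP hμ0
      have h3 : β * (l * ψ a + μ * ψ t') ≤ β * ψ u := mul_le_mul_of_nonneg_left hkey hβ
      have e1 : l * C + μ * C = C := by rw [← add_mul, hsum, one_mul]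
      have e2 : μ * (C + m * (t' - a)) = μ * C + m * (u - a) := by
        rw [mul_add, ← hμeq]; ring
      have e3 : β * (l * ψ a + μ * ψ t') = l * (β * ψ a) + μ * (β * ψ t') := by ring
      linarith only [h1, h2, h3, e1, e2, e3]
    rw [hmu]
    simp only [hC] at hfinal
    linarith only [hsplit, hIa, hfinal]
end

section
/- (Theorem 2: reduction to a finite horizon for plateaued ψ.) Let ψ : ℝ → ℝ be concave, nondecreasing, with ψ(0) = 0 and ψ(u) > 0 for u > 0, and suppose there is u' > 0 such that ψ(u) = ψ(u') for all u ≥ u'. Define S₁ = {β ∈ ℝ : there exists y : ℝ → ℝ continuous on [0, ∞) such that for all u ≥ 0 and all s ≥ 0, ∫₀ᵘ y(t) dt ≤ β·ψ(u) + y(u)·s − ψ(s)} and S₂ = {β ∈ ℝ : there exists y : ℝ → ℝ continuous on [0, u'] with y(u') = 0 such that for all u ∈ [0, u'] and all s ≥ 0, ∫₀ᵘ y(t) dt ≤ β·ψ(u) + y(u)·s − ψ(s)}. Then inf S₁ = inf S₂. -/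
private lemma uIccIci {a b : ℝ} (ha : 0 ≤ a) (hb : 0 ≤ b) :
    Set.uIcc a b ⊆ Set.Ici 0 := by
  intro x hx
  rcases Set.mem_uIcc.mp hx with ⟨h1, _⟩ | ⟨h1, _⟩
  · exact le_trans ha h1
  · exact le_trans hb h1

private lemma ypos (C yu : ℝ) (h : ∀ s ≥ (0:ℝ), 0 ≤ C + yu * s) : 0 ≤ yu := by
  by_contra hc
  push_neg at hc
  have hyne : -yu > 0 := by linarith
  set s := (max C 0 + 1) / (-yu) with hs
  have hs0 : 0 ≤ s := by positivity
  have h1 := h s hs0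
  have h2 : yu * s = -(max C 0 + 1) := by
    rw [hs]
    field_simp
    rw [div_self hc.ne]
  have h3 := le_max_left C 0
  linarith

private lemma key_lemma (ψ : ℝ → ℝ)
    (hmono : Monotone ψ) (h0 : ψ 0 = 0) (hpos : ∀ u > (0:ℝ), 0 < ψ u)
    (u' : ℝ) (hu' : 0 < u') (hplateau : ∀ u ≥ u', ψ u = ψ u')
    (β : ℝ) (y : ℝ → ℝ) (hy : ContinuousOn y (Set.Ici 0))
    (hfeas : ∀ u ≥ (0:ℝ), ∀ s ≥ (0:ℝ),
      (∫ t in (0:ℝ)..u, y t) ≤ β * ψ u + y u * s - ψ s) :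
    (∀ u ≥ (0:ℝ), 0 ≤ y u) ∧ 0 ≤ β ∧
    (∀ a b : ℝ, 0 ≤ a → a ≤ b → (∫ t in (0:ℝ)..a, y t) ≤ ∫ t in (0:ℝ)..b, y t) ∧
    (∀ s ≥ (0:ℝ), (∫ t in (0:ℝ)..u', y t) ≤ β * ψ u' - ψ s) := by
  have hψ0 : ∀ s ≥ (0:ℝ), 0 ≤ ψ s := fun s hs => h0 ▸ hmono hs
  have yn : ∀ u ≥ (0:ℝ), 0 ≤ y u := by
    intro u hu
    apply ypos (β * ψ u - ∫ t in (0:ℝ)..u, y t) (y u)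
    intro s hs
    have h1 := hfeas u hu s hs
    have h2 := hψ0 s hs
    linarith
  have hyint : ∀ a b : ℝ, 0 ≤ a → 0 ≤ b → IntervalIntegrable y MeasureTheory.volume a b :=
    fun a b ha hb => (hy.mono (uIccIci ha hb)).intervalIntegrable
  have hFmono : ∀ a b : ℝ, 0 ≤ a → a ≤ b →
      (∫ t in (0:ℝ)..a, y t) ≤ ∫ t in (0:ℝ)..b, y t := by
    intro a b ha hab
    have hb : (0:ℝ) ≤ b := le_trans ha hab
    have hsplit := intervalIntegral.integral_add_adjacent_intervals
      (hyint 0 a le_rfl ha) (hyint a b ha hb)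
    have htail : 0 ≤ ∫ t in a..b, y t :=
      intervalIntegral.integral_nonneg hab (fun t ht => yn t (le_trans ha ht.1))
    linarith
  have hFnn : ∀ b : ℝ, 0 ≤ b → 0 ≤ ∫ t in (0:ℝ)..b, y t :=
    fun b hb => intervalIntegral.integral_nonneg hb (fun t ht => yn t ht.1)
  have hβ : 0 ≤ β := by
    have h1 := hfeas u' hu'.le 0 le_rfl
    rw [h0] at h1
    have h2 := hFnn u' hu'.le
    by_contra hcn
    push_neg at hcn
    have : β * ψ u' < 0 := mul_neg_of_neg_of_pos hcn (hpos u' hu')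
    linarith
  have hsmall : ∀ δ > (0:ℝ), ∃ v ≥ u', y v < δ := by
    intro δ hδ
    by_contra hcn
    push_neg at hcn
    have hβψ : 0 ≤ β * ψ u' := by
      have h1 := hfeas u' hu'.le 0 le_rfl
      rw [h0] at h1
      have h2 := hFnn u' hu'.le
      linarith
    set w := u' + (β * ψ u' + 1) / δ with hw
    have hww : u' ≤ w := by
      have h : 0 ≤ (β * ψ u' + 1) / δ := by positivity
      rw [hw]
      linarith
    have hw0 : (0:ℝ) ≤ w := le_trans hu'.le hww
    have hFw : (∫ t in (0:ℝ)..w, y t) ≤ β * ψ u' := by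
      have h1 := hfeas w hw0 0 le_rfl
      rw [h0, hplateau w hww] at h1
      linarith
    have hsplit := intervalIntegral.integral_add_adjacent_intervals
      (hyint 0 u' le_rfl hu'.le) (hyint u' w hu'.le hw0)
    have htail : (w - u') * δ ≤ ∫ t in u'..w, y t := by
      have h1 : (∫ _t in u'..w, δ) ≤ ∫ t in u'..w, y t := by
        apply intervalIntegral.integral_mono_on hww intervalIntegrable_const
          (hyint u' w hu'.le hw0)
        intro t ht
        exact hcn t ht.1
      rw [intervalIntegral.integral_const, smul_eq_mul] at h1
      exact h1
    have heq : (w - u') * δ = β * ψ u' + 1 := by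
      rw [hw]
      field_simp
      ring
    have h2 := hFnn u' hu'.le
    linarith
  refine ⟨yn, hβ, hFmono, ?_⟩
  intro s hs
  apply le_of_forall_pos_le_add
  intro δ hδ
  obtain ⟨v, hv, hyv⟩ := hsmall (δ / (s + 1)) (by positivity)
  have hv0 : (0:ℝ) ≤ v := le_trans hu'.le hv
  have h1 := hfeas v hv0 s hs
  rw [hplateau v hv] at h1
  have h2 : y v * s ≤ δ := by
    have h3 : y v * s ≤ δ / (s + 1) * s := mul_le_mul_of_nonneg_right hyv.le hs
    have h4 : δ / (s + 1) * s ≤ δ := by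
      rw [div_mul_eq_mul_div, div_le_iff₀ (by positivity)]
      nlinarith
    linarith
  have h5 := hFmono u' v hu'.le hv
  linarith

/-- Theorem 2: for a plateaued `ψ`, the infinite-horizon smoothing-design
problem and its finite-horizon restriction have the same optimal value. -/
theorem stmt_14 (ψ : ℝ → ℝ) (hconc : ConcaveOn ℝ Set.univ ψ)
    (hmono : Monotone ψ) (h0 : ψ 0 = 0) (hpos : ∀ u > (0:ℝ), 0 < ψ u)
    (u' : ℝ) (hu' : 0 < u') (hplateau : ∀ u ≥ u', ψ u = ψ u') :
    sInf {β : ℝ | ∃ y : ℝ → ℝ, ContinuousOn y (Set.Ici 0) ∧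
        ∀ u ≥ (0:ℝ), ∀ s ≥ (0:ℝ),
          (∫ t in (0:ℝ)..u, y t) ≤ β * ψ u + y u * s - ψ s} =
    sInf {β : ℝ | ∃ y : ℝ → ℝ, ContinuousOn y (Set.Icc 0 u') ∧ y u' = 0 ∧
        ∀ u ∈ Set.Icc (0:ℝ) u', ∀ s ≥ (0:ℝ),
          (∫ t in (0:ℝ)..u, y t) ≤ β * ψ u + y u * s - ψ s} := by
  set S₁ := {β : ℝ | ∃ y : ℝ → ℝ, ContinuousOn y (Set.Ici 0) ∧
        ∀ u ≥ (0:ℝ), ∀ s ≥ (0:ℝ),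
          (∫ t in (0:ℝ)..u, y t) ≤ β * ψ u + y u * s - ψ s} with hS₁def
  set S₂ := {β : ℝ | ∃ y : ℝ → ℝ, ContinuousOn y (Set.Icc 0 u') ∧ y u' = 0 ∧
        ∀ u ∈ Set.Icc (0:ℝ) u', ∀ s ≥ (0:ℝ),
          (∫ t in (0:ℝ)..u, y t) ≤ β * ψ u + y u * s - ψ s} with hS₂def
  have hψ0 : ∀ s ≥ (0:ℝ), 0 ≤ ψ s := fun s hs => h0 ▸ hmono hs
  -- Direction 1 : S₂ ⊆ S₁ (extend by zero).
  have hS21 : S₂ ⊆ S₁ := by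
    rintro β ⟨y, hy, hyu', hfeas⟩
    have hYc : ContinuousOn (fun u => y (min u u')) (Set.Ici 0) :=
      hy.comp ((continuous_id.min continuous_const).continuousOn)
        (fun u hu => ⟨le_min hu hu'.le, min_le_right _ _⟩)
    refine ⟨fun u => y (min u u'), hYc, ?_⟩
    intro u hu s hs
    rcases le_or_gt u u' with h | h
    · have h1 : (∫ t in (0:ℝ)..u, y (min t u')) = ∫ t in (0:ℝ)..u, y t := by
        apply intervalIntegral.integral_congr
        intro t ht
        rw [Set.uIcc_of_le hu] at ht
        simp only
        rw [min_eq_left (le_trans ht.2 h)]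
      rw [h1]
      simp only [min_eq_left h]
      exact hfeas u ⟨hu, h⟩ s hs
    · have hYint : ∀ a b : ℝ, 0 ≤ a → 0 ≤ b →
          IntervalIntegrable (fun t => y (min t u')) MeasureTheory.volume a b :=
        fun a b ha hb => (hYc.mono (uIccIci ha hb)).intervalIntegrable
      have hsplit := intervalIntegral.integral_add_adjacent_intervals
        (hYint 0 u' le_rfl hu'.le) (hYint u' u hu'.le hu)
      have h2 : (∫ t in (0:ℝ)..u', y (min t u')) = ∫ t in (0:ℝ)..u', y t := by
        apply intervalIntegral.integral_congr
        intro t ht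
        rw [Set.uIcc_of_le hu'.le] at ht
        simp only
        rw [min_eq_left ht.2]
      have h3 : (∫ t in u'..u, y (min t u')) = 0 := by
        have heq : (∫ t in u'..u, y (min t u')) = ∫ _t in u'..u, (0:ℝ) := by
          apply intervalIntegral.integral_congr
          intro t ht
          rw [Set.uIcc_of_le h.le] at ht
          simp only
          rw [min_eq_right ht.1, hyu']
        rw [heq, intervalIntegral.integral_zero]
      have h4 := hfeas u' ⟨hu'.le, le_rfl⟩ s hs
      rw [hyu'] at h4
      simp only [min_eq_right h.le]
      rw [← hsplit, h2, h3, hyu', hplateau u h.le]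
      linarith
  -- Direction 2 : β ∈ S₁ → β + ε ∈ S₂.
  have hS12 : ∀ β ∈ S₁, ∀ ε > (0:ℝ), β + ε ∈ S₂ := by
    rintro β ⟨y, hy, hfeas⟩ ε hε
    obtain ⟨yn, hβ, hFmono, hFu'⟩ :=
      key_lemma ψ hmono h0 hpos u' hu' hplateau β y hy hfeas
    obtain ⟨x₀, hx₀, hx₀max⟩ := isCompact_Icc.exists_isMaxOn
      (Set.nonempty_Icc.mpr hu'.le) (hy.mono Set.Icc_subset_Ici_self)
    set M := max (y x₀) 1 with hM
    have hM1 : (1:ℝ) ≤ M := le_max_right _ _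
    have hMy : ∀ t ∈ Set.Icc (0:ℝ) u', y t ≤ M :=
      fun t ht => le_trans (hx₀max ht) (le_max_left _ _)
    have hβε : (0:ℝ) ≤ β + ε := by linarith
    set η := min (u'/2) (ε * u' / (2 * (β + ε + 1))) with hη
    have hη0 : 0 < η := lt_min (by positivity) (by positivity)
    have hη1 : η ≤ u'/2 := min_le_left _ _
    have hη2 : η ≤ ε * u' / (2 * (β + ε + 1)) := min_le_right _ _
    have hgc : Continuous (fun u : ℝ => M * (u' - u) / η) :=
      (continuous_const.mul (continuous_const.sub continuous_id)).div_const η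
    refine ⟨fun u => min (y u) (M * (u' - u) / η), ?_, ?_, ?_⟩
    · exact (hy.mono Set.Icc_subset_Ici_self).inf hgc.continuousOn
    · simp only [sub_self, mul_zero, zero_div]
      exact min_eq_right (yn u' hu'.le)
    · intro u hu s hs
      have hyintu : IntervalIntegrable y MeasureTheory.volume 0 u :=
        (hy.mono (uIccIci le_rfl hu.1)).intervalIntegrable
      have htint : IntervalIntegrable (fun t => min (y t) (M * (u' - t) / η))
          MeasureTheory.volume 0 u :=
        (((hy.mono (uIccIci le_rfl hu.1)).inf hgc.continuousOn)).intervalIntegrable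
      have hIle : (∫ t in (0:ℝ)..u, min (y t) (M * (u' - t) / η)) ≤
          ∫ t in (0:ℝ)..u, y t :=
        intervalIntegral.integral_mono_on hu.1 htint hyintu (fun t _ => min_le_left _ _)
      rcases le_or_gt (y u) (M * (u' - u) / η) with hcase | hcase
      · simp only [min_eq_left hcase]
        have h1 := hfeas u hu.1 s hs
        have h2 := hψ0 u hu.1
        nlinarith
      · have hmin : min (y u) (M * (u' - u) / η) = M * (u' - u) / η :=
          min_eq_right hcase.le
        have hyuM : y u ≤ M := hMy u hu
        have huη : u' - u < η := by
          by_contra hcc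
          push_neg at hcc
          have : M ≤ M * (u' - u) / η := by
            rw [le_div_iff₀ hη0]
            nlinarith
          linarith
        have hψlb : (1 - η/u') * ψ u' ≤ ψ u := by
          have ha : (0:ℝ) ≤ 1 - η/u' := by
            rw [sub_nonneg, div_le_one hu']
            linarith
          have hb : (0:ℝ) ≤ η/u' := by positivity
          have hab : (1 - η/u') + η/u' = 1 := by ring
          have hci := hconc.2 (Set.mem_univ u') (Set.mem_univ (0:ℝ)) ha hb hab
          rw [smul_eq_mul, smul_eq_mul, smul_eq_mul, smul_eq_mul] at hci
          have harg : (1 - η/u') * u' + (η/u') * 0 = u' - η := by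
            field_simp
            ring
          rw [harg, h0, mul_zero, add_zero] at hci
          have hm2 : ψ (u' - η) ≤ ψ u := hmono (by linarith)
          linarith
        have hkey : β * ψ u' ≤ (β + ε) * ψ u := by
          have e0 : (β + ε) * (ε * u' / (2 * (β + ε + 1))) ≤ ε * u' / 2 := by
            rw [mul_div_assoc']
            rw [div_le_div_iff₀ (by positivity) (by norm_num)]
            nlinarith [mul_nonneg hε.le hu'.le]
          have e1 : (β + ε) * η ≤ ε * u' := by
            have := mul_le_mul_of_nonneg_left hη2 hβε
            have h2 : (0:ℝ) ≤ ε * u' := mul_nonneg hε.le hu'.le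
            linarith
          have e2 : (β + ε) * η / u' ≤ ε := by
            rw [div_le_iff₀ hu']
            nlinarith
          have e3 : ((β + ε) * η / u') * ψ u' ≤ ε * ψ u' :=
            mul_le_mul_of_nonneg_right e2 (hψ0 u' hu'.le)
          have e4 : (β + ε) * ((1 - η/u') * ψ u') =
              (β + ε) * ψ u' - ((β + ε) * η / u') * ψ u' := by
            field_simp
          have e5 := mul_le_mul_of_nonneg_left hψlb hβε
          linarith
        have hgnn : 0 ≤ M * (u' - u) / η := by
          have : 0 ≤ u' - u := by linarith [hu.2]
          positivity
        have hIy : (∫ t in (0:ℝ)..u, y t) ≤ ∫ t in (0:ℝ)..u', y t :=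
          hFmono u u' hu.1 hu.2
        have hF := hFu' s hs
        simp only [hmin]
        have hms : 0 ≤ M * (u' - u) / η * s := mul_nonneg hgnn hs
        linarith
  -- Assemble.
  rcases Set.eq_empty_or_nonempty S₁ with hS₁e | ⟨β₀, hβ₀⟩
  · have hS₂e : S₂ = ∅ := Set.eq_empty_of_subset_empty (hS₁e ▸ hS21)
    rw [hS₁e, hS₂e]
  · have hbdd1 : BddBelow S₁ := by
      refine ⟨0, ?_⟩
      rintro β ⟨y, hy, hfeas⟩
      exact (key_lemma ψ hmono h0 hpos u' hu' hplateau β y hy hfeas).2.1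
    have hbdd2 : BddBelow S₂ := hbdd1.mono hS21
    have hS₂ne : S₂.Nonempty := ⟨β₀ + 1, hS12 β₀ hβ₀ 1 one_pos⟩
    apply le_antisymm
    · exact csInf_le_csInf hbdd1 hS₂ne hS21
    · apply le_csInf ⟨β₀, hβ₀⟩
      intro β hβ
      apply le_of_forall_pos_le_add
      intro ε hε
      exact csInf_le hbdd2 (hS12 β hβ ε hε)
end

section
/- (Optimal smoothing for adwords.) Let ψ(u) = min(u, 1) and define y : ℝ → ℝ by y(u) = max((e − eᵘ)/(e − 1), 0), and let β = e/(e − 1) = (1 − 1/e)⁻¹. Then (y, β) is feasible for the smoothing-design problem: for all u ≥ 0 and all s ≥ 0, ∫₀ᵘ y(t) dt ≤ β·min(u, 1) + y(u)·s − min(s, 1). (Hence the smoothing y achieves competitive ratio 1/β = 1 − 1/e for the adwords objective.) -/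
lemma aw_cont : Continuous (fun t : ℝ => max ((Real.exp 1 - Real.exp t) / (Real.exp 1 - 1)) 0) := by
  exact Continuous.max (by continuity) continuous_const

lemma aw_int (a b : ℝ) :
    ∫ t in a..b, (Real.exp 1 - Real.exp t) / (Real.exp 1 - 1)
      = ((b - a) * Real.exp 1 - (Real.exp b - Real.exp a)) / (Real.exp 1 - 1) := by
  rw [intervalIntegral.integral_div,
    intervalIntegral.integral_sub intervalIntegrable_const
      (Real.continuous_exp.intervalIntegrable a b),
    intervalIntegral.integral_const, integral_exp]
  rw [smul_eq_mul]

lemma aw_eq_on (a b : ℝ) (ha : a ≤ 1) (hb : b ≤ 1) :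
    ∫ t in a..b, max ((Real.exp 1 - Real.exp t) / (Real.exp 1 - 1)) 0
      = ∫ t in a..b, (Real.exp 1 - Real.exp t) / (Real.exp 1 - 1) := by
  apply intervalIntegral.integral_congr
  intro t ht
  have ht1 : t ≤ 1 := le_trans ht.2 (max_le ha hb)
  have h1 : (1:ℝ) < Real.exp 1 := by
    have := Real.add_one_lt_exp (one_ne_zero); linarith
  have h2 : Real.exp t ≤ Real.exp 1 := Real.exp_le_exp.mpr ht1
  have : 0 ≤ (Real.exp 1 - Real.exp t) / (Real.exp 1 - 1) :=
    div_nonneg (by linarith) (by linarith)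
  simp [max_eq_left this]

/-- Optimal smoothing for adwords: `y(u) = ((e − eᵘ)/(e − 1))₊` together with
`β = e/(e − 1)` is feasible for the smoothing-design problem for
`ψ(u) = min(u, 1)`. -/
theorem stmt_15 :
    ∀ u ≥ (0:ℝ), ∀ s ≥ (0:ℝ),
      (∫ t in (0:ℝ)..u, max ((Real.exp 1 - Real.exp t) / (Real.exp 1 - 1)) 0) ≤
        (Real.exp 1 / (Real.exp 1 - 1)) * min u 1 +
          (max ((Real.exp 1 - Real.exp u) / (Real.exp 1 - 1)) 0) * s - min s 1 := by
  intro u hu s hs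
  have h1 : (1:ℝ) < Real.exp 1 := by
    have := Real.add_one_lt_exp (one_ne_zero : (1:ℝ) ≠ 0); linarith
  have hd : (0:ℝ) < Real.exp 1 - 1 := by linarith
  have hd' : Real.exp 1 - 1 ≠ 0 := ne_of_gt hd
  have heu : (1:ℝ) ≤ Real.exp u := by
    calc (1:ℝ) = Real.exp 0 := by simp
    _ ≤ Real.exp u := Real.exp_le_exp.mpr hu
  have hm1 : min s 1 ≤ 1 := min_le_right _ _
  have hm2 : min s 1 ≤ s := min_le_left _ _
  rcases le_or_gt u 1 with hu1 | hu1
  · -- u ≤ 1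
    rw [aw_eq_on 0 u (by norm_num) hu1, aw_int]
    have hue : Real.exp u ≤ Real.exp 1 := Real.exp_le_exp.mpr hu1
    have hy : max ((Real.exp 1 - Real.exp u) / (Real.exp 1 - 1)) 0
        = (Real.exp 1 - Real.exp u) / (Real.exp 1 - 1) :=
      max_eq_left (div_nonneg (by linarith) (by linarith))
    rw [hy, min_eq_left hu1]
    rw [div_le_iff₀ hd] at *
    rcases le_total s 1 with hs1 | hs1
    · rw [min_eq_left hs1]
      have : s * (Real.exp u - 1) ≤ 1 * (Real.exp u - 1) :=
        mul_le_mul_of_nonneg_right hs1 (by linarith)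
      field_simp
      nlinarith [mul_le_mul_of_nonneg_right hs1 (sub_nonneg.mpr heu), Real.exp_zero]
    · rw [min_eq_right hs1]
      field_simp
      nlinarith [mul_le_mul_of_nonneg_left hs1 (sub_nonneg.mpr hue), Real.exp_zero]
  · -- u > 1
    have hint : ∀ a b : ℝ, IntervalIntegrable
        (fun t : ℝ => max ((Real.exp 1 - Real.exp t) / (Real.exp 1 - 1)) 0)
        MeasureTheory.volume a b := fun a b => aw_cont.intervalIntegrable a b
    have hsplit := intervalIntegral.integral_add_adjacent_intervals
      (hint 0 1) (hint 1 u)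
    have hz : ∫ t in (1:ℝ)..u, max ((Real.exp 1 - Real.exp t) / (Real.exp 1 - 1)) 0 = 0 := by
      rw [intervalIntegral.integral_congr (g := fun _ => (0:ℝ)) ?_, intervalIntegral.integral_const]
      · simp
      · intro t ht
        have ht1 : (1:ℝ) ≤ t := by
          have := ht.1
          rwa [min_eq_left hu1.le] at this
        have : Real.exp 1 ≤ Real.exp t := Real.exp_le_exp.mpr ht1
        have : (Real.exp 1 - Real.exp t) / (Real.exp 1 - 1) ≤ 0 :=
          div_nonpos_of_nonpos_of_nonneg (by linarith) (by linarith)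
        simp [max_eq_right this]
    have h01 : ∫ t in (0:ℝ)..1, max ((Real.exp 1 - Real.exp t) / (Real.exp 1 - 1)) 0
        = 1 / (Real.exp 1 - 1) := by
      rw [aw_eq_on 0 1 (by norm_num) le_rfl, aw_int]
      simp
    have hLHS : ∫ t in (0:ℝ)..u, max ((Real.exp 1 - Real.exp t) / (Real.exp 1 - 1)) 0
        = 1 / (Real.exp 1 - 1) := by
      rw [← hsplit, h01, hz, add_zero]
    rw [hLHS, min_eq_right hu1.le]
    have hue : Real.exp 1 ≤ Real.exp u := Real.exp_le_exp.mpr hu1.le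
    have hy : max ((Real.exp 1 - Real.exp u) / (Real.exp 1 - 1)) 0 = 0 :=
      max_eq_right (div_nonpos_of_nonpos_of_nonneg (by linarith) (by linarith))
    rw [hy, zero_mul]
    rw [div_le_iff₀ hd, sub_mul]
    have hc : Real.exp 1 / (Real.exp 1 - 1) * (Real.exp 1 - 1) = Real.exp 1 :=
      div_mul_cancel₀ _ hd'
    nlinarith
end

section
/- (Optimal smoothing for adwords with the sequential algorithm.) Let c ≥ 0 be a real number, let β = (1 − e^{−1/(c+1)})⁻¹, and define y : ℝ → ℝ by y(u) = β·max(1 − e^{(u−1)/(1+c)}, 0). Then (y, β) is feasible for the sequential smoothing-design problem for ψ(u) = min(u, 1): for all u ≥ 0 and all s ≥ 0, ∫₀ᵘ y(t) dt + c·(1 − y(u)) ≤ β·min(u, 1) + y(u)·s − min(s, 1). (This yields the competitive ratio 1 − e^{−1/(c+1)} for adwords with bid-to-budget ratio c.) -/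
/-- Antiderivative computation for the exponential piece. -/
lemma int_exp_aux (a v w : ℝ) (ha : 0 < a) :
    ∫ t in v..w, Real.exp ((t - 1) / a)
      = a * Real.exp ((w - 1) / a) - a * Real.exp ((v - 1) / a) := by
  have ha' : a ≠ 0 := ne_of_gt ha
  have hderiv : ∀ t : ℝ, HasDerivAt (fun t => a * Real.exp ((t - 1) / a))
      (Real.exp ((t - 1) / a)) t := by
    intro t
    have h1 : HasDerivAt (fun t : ℝ => (t - 1) / a) (1 / a) t := by
      simpa using ((hasDerivAt_id t).sub_const 1).div_const a
    have h2 := (Real.hasDerivAt_exp ((t - 1) / a)).comp t h1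
    have h3 := h2.const_mul a
    exact h3.congr_deriv (by field_simp)
  have hcont : IntervalIntegrable (fun t => Real.exp ((t - 1) / a))
      MeasureTheory.volume v w := by
    apply Continuous.intervalIntegrable
    continuity
  rw [intervalIntegral.integral_eq_sub_of_hasDerivAt (fun t _ => hderiv t) hcont]

lemma y_lower (y s : ℝ) (hy0 : 0 ≤ y) (hy1 : y ≤ 1) (hs : 0 ≤ s) :
    y - 1 ≤ y * s - min s 1 := by
  rcases le_total s 1 with h | h
  · rw [min_eq_left h]; nlinarith
  · rw [min_eq_right h]; nlinarith

/-- Optimal smoothing for adwords with the sequential algorithm: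
`y(u) = β·(1 − e^{(u−1)/(1+c)})₊` with `β = (1 − e^{−1/(c+1)})⁻¹` is feasible
for the sequential smoothing-design problem for `ψ(u) = min(u, 1)`. -/
theorem stmt_17 (c : ℝ) (hc : 0 ≤ c) :
    ∀ u ≥ (0:ℝ), ∀ s ≥ (0:ℝ),
      (∫ t in (0:ℝ)..u,
          (1 - Real.exp (-1 / (c + 1)))⁻¹ *
            max (1 - Real.exp ((t - 1) / (1 + c))) 0) +
          c * (1 - (1 - Real.exp (-1 / (c + 1)))⁻¹ *
            max (1 - Real.exp ((u - 1) / (1 + c))) 0) ≤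
        (1 - Real.exp (-1 / (c + 1)))⁻¹ * min u 1 +
          ((1 - Real.exp (-1 / (c + 1)))⁻¹ *
            max (1 - Real.exp ((u - 1) / (1 + c))) 0) * s - min s 1 := by
  intro u hu s hs
  have ha : (0:ℝ) < 1 + c := by linarith
  set a : ℝ := 1 + c with ha_def
  set β : ℝ := (1 - Real.exp (-1 / (c + 1)))⁻¹ with hβ_def
  have he0 : Real.exp (-1 / (c + 1)) = Real.exp ((0 - 1) / a) := by
    congr 1; rw [ha_def]; ring
  have hexp_lt : Real.exp (-1 / (c + 1)) < 1 := by
    rw [Real.exp_lt_one_iff]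
    have h0 : (0:ℝ) < c + 1 := by linarith
    rw [div_neg_iff]; right; constructor <;> linarith
  have hpos : 0 < 1 - Real.exp (-1 / (c + 1)) := by linarith
  have hβ1 : β * (1 - Real.exp ((0 - 1) / a)) = 1 := by
    rw [← he0]; exact inv_mul_cancel₀ (ne_of_gt hpos)
  have hβpos : 0 < β := inv_pos.mpr hpos
  have hcf : Continuous fun t : ℝ => β * max (1 - Real.exp ((t - 1) / a)) 0 := by
    continuity
  -- integral over [0, v] for v ≤ 1
  have hint : ∀ v : ℝ, v ≤ 1 → (∫ t in (0:ℝ)..v, β * max (1 - Real.exp ((t - 1) / a)) 0)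
      = β * (v - (a * Real.exp ((v - 1) / a) - a * Real.exp ((0 - 1) / a))) := by
    intro v hv
    rw [intervalIntegral.integral_const_mul]
    congr 1
    have hcongr : ∀ t ∈ Set.uIcc (0:ℝ) v,
        max (1 - Real.exp ((t - 1) / a)) 0 = 1 - Real.exp ((t - 1) / a) := by
      intro t ht
      rw [max_eq_left]
      have htle : t ≤ 1 := by
        rcases le_total (0:ℝ) v with h | h
        · rw [Set.uIcc_of_le h] at ht; exact le_trans ht.2 hv
        · rw [Set.uIcc_of_ge h] at ht; linarith [ht.2]
      have : Real.exp ((t - 1) / a) ≤ 1 := by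
        rw [Real.exp_le_one_iff]
        apply div_nonpos_of_nonpos_of_nonneg <;> linarith
      linarith
    rw [intervalIntegral.integral_congr hcongr]
    have hsub : (∫ t in (0:ℝ)..v, (1 - Real.exp ((t - 1) / a)))
        = (∫ t in (0:ℝ)..v, (1:ℝ)) - ∫ t in (0:ℝ)..v, Real.exp ((t - 1) / a) := by
      apply intervalIntegral.integral_sub
      · exact intervalIntegrable_const
      · apply Continuous.intervalIntegrable; continuity
    rw [hsub, int_exp_aux a 0 v ha]
    simp
  rcases le_total u 1 with hu1 | hu1
  · -- case u ≤ 1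
    have hE1 : Real.exp ((u - 1) / a) ≤ 1 := by
      rw [Real.exp_le_one_iff]
      apply div_nonpos_of_nonpos_of_nonneg <;> linarith
    have hEmono : Real.exp ((0 - 1) / a) ≤ Real.exp ((u - 1) / a) := by
      apply Real.exp_le_exp.mpr
      gcongr <;> linarith
    have hmax : max (1 - Real.exp ((u - 1) / a)) 0 = 1 - Real.exp ((u - 1) / a) :=
      max_eq_left (by linarith)
    have hy0 : 0 ≤ β * (1 - Real.exp ((u - 1) / a)) := by
      apply mul_nonneg (le_of_lt hβpos); linarith
    have hy1 : β * (1 - Real.exp ((u - 1) / a)) ≤ 1 := by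
      calc β * (1 - Real.exp ((u - 1) / a)) ≤ β * (1 - Real.exp ((0 - 1) / a)) := by
            apply mul_le_mul_of_nonneg_left (by linarith) (le_of_lt hβpos)
        _ = 1 := hβ1
    have hstep := y_lower (β * (1 - Real.exp ((u - 1) / a))) s hy0 hy1 hs
    rw [hint u hu1, hmax, min_eq_left hu1]
    have hid : β * (u - (a * Real.exp ((u - 1) / a) - a * Real.exp ((0 - 1) / a)))
        + c * (1 - β * (1 - Real.exp ((u - 1) / a)))
        = β * u + β * (1 - Real.exp ((u - 1) / a)) - 1 := by
      linear_combination (-a) * hβ1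
    linarith
  · -- case u ≥ 1
    have hE1 : 1 ≤ Real.exp ((u - 1) / a) := by
      rw [Real.one_le_exp_iff]
      apply div_nonneg <;> linarith
    have hmax : max (1 - Real.exp ((u - 1) / a)) 0 = 0 :=
      max_eq_right (by linarith)
    have hsplit : (∫ t in (0:ℝ)..u, β * max (1 - Real.exp ((t - 1) / a)) 0)
        = (∫ t in (0:ℝ)..1, β * max (1 - Real.exp ((t - 1) / a)) 0)
          + ∫ t in (1:ℝ)..u, β * max (1 - Real.exp ((t - 1) / a)) 0 :=
      (intervalIntegral.integral_add_adjacent_intervals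
        (hcf.intervalIntegrable 0 1) (hcf.intervalIntegrable 1 u)).symm
    have hzero : (∫ t in (1:ℝ)..u, β * max (1 - Real.exp ((t - 1) / a)) 0) = 0 := by
      have hcongr : ∀ t ∈ Set.uIcc (1:ℝ) u,
          β * max (1 - Real.exp ((t - 1) / a)) 0 = 0 := by
        intro t ht
        rw [Set.uIcc_of_le hu1] at ht
        have : 1 ≤ Real.exp ((t - 1) / a) := by
          rw [Real.one_le_exp_iff]
          have h1t := ht.1
          apply div_nonneg <;> linarith
        rw [max_eq_right (by linarith), mul_zero]
      calc (∫ t in (1:ℝ)..u, β * max (1 - Real.exp ((t - 1) / a)) 0)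
          = ∫ _ in (1:ℝ)..u, (0:ℝ) := intervalIntegral.integral_congr hcongr
        _ = 0 := by simp
    have hone : (∫ t in (0:ℝ)..1, β * max (1 - Real.exp ((t - 1) / a)) 0)
        = β * (1 - (a * 1 - a * Real.exp ((0 - 1) / a))) := by
      rw [hint 1 le_rfl]; norm_num
    rw [hsplit, hzero, hone, hmax, min_eq_right hu1]
    have hmin : min s 1 ≤ 1 := min_le_right s 1
    nlinarith [hβ1]
end

section
/- Let n ≥ 1 and let A₀ be a real symmetric positive definite n×n matrix. For every ε > 0 there exists M > 0 such that every real symmetric positive semidefinite n×n matrix U with trace(U) ≥ M satisfies 0 ≤ n − trace((A₀ + U)⁻¹ · A₀) ≤ ε·(log det(A₀ + U) − log det(A₀)). In particular, for ψ(U) = log det(U + A₀) one has ⟨∇ψ(U), U⟩/(ψ(U) − ψ(0)) → 0 as trace(U) → ∞ over the positive semidefinite cone, so ᾱ_ψ = −1. -/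
open Matrix Finset

variable {n : ℕ}

lemma psd_trace_nonneg {S : Matrix (Fin n) (Fin n) ℝ} (hS : S.PosSemidef) : 0 ≤ S.trace := by
  rw [Matrix.trace]
  refine Finset.sum_nonneg fun i _ => ?_
  have := hS.dotProduct_mulVec_nonneg (Pi.single i 1)
  simpa [dotProduct, Matrix.mulVec, Pi.single_apply, Matrix.diag] using this

open scoped MatrixOrder Matrix.Norms.L2Operator in
lemma trace_mul_nonneg' {P Q : Matrix (Fin n) (Fin n) ℝ} (hP : P.PosSemidef)
    (hQ : Q.PosSemidef) : 0 ≤ (P * Q).trace := by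
  obtain ⟨W, rfl⟩ := CStarAlgebra.nonneg_iff_eq_star_mul_self.mp hQ.nonneg
  rw [← Matrix.mul_assoc, Matrix.trace_mul_cycle]
  exact psd_trace_nonneg (hP.mul_mul_conjTranspose_same W)

lemma quad_lower {A : Matrix (Fin n) (Fin n) ℝ} (hA : A.IsHermitian) {c : ℝ}
    (hc : ∀ i, c ≤ hA.eigenvalues i) (x : Fin n → ℝ) :
    c * (x ⬝ᵥ x) ≤ x ⬝ᵥ (A *ᵥ x) := by
  set V : Matrix (Fin n) (Fin n) ℝ := (hA.eigenvectorUnitary : Matrix (Fin n) (Fin n) ℝ) with hV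
  have hVV : V * star V = 1 := (Matrix.mem_unitaryGroup_iff).mp hA.eigenvectorUnitary.2
  have hst : star V = Vᵀ := by
    rw [Matrix.star_eq_conjTranspose, Matrix.conjTranspose_eq_transpose_of_trivial]
  set y : Fin n → ℝ := Vᵀ *ᵥ x with hy
  have hyy : y ⬝ᵥ y = x ⬝ᵥ x := by
    rw [hy, Matrix.dotProduct_mulVec, Matrix.vecMul_transpose, Matrix.mulVec_mulVec,
      ← hst, hVV, Matrix.one_mulVec]
  have hAx : x ⬝ᵥ (A *ᵥ x) = ∑ i, hA.eigenvalues i * (y i * y i) := by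
    nth_rewrite 1 [hA.spectral_theorem]
    rw [Unitary.conjStarAlgAut_apply, ← hV]
    rw [hst, ← Matrix.mulVec_mulVec, ← Matrix.mulVec_mulVec, Matrix.dotProduct_mulVec,
      ← Matrix.mulVec_transpose]
    simp only [← hy, dotProduct, Matrix.mulVec_diagonal]
    refine Finset.sum_congr rfl fun i _ => ?_
    simp only [Function.comp_apply, RCLike.ofReal_real_eq_id, id_eq]; ring
  have hfin : ∑ i, c * (y i * y i) ≤ ∑ i, hA.eigenvalues i * (y i * y i) :=
    Finset.sum_le_sum fun i _ => by nlinarith [hc i, mul_self_nonneg (y i)]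
  calc c * (x ⬝ᵥ x) = ∑ i, c * (y i * y i) := by
        rw [← hyy, dotProduct, Finset.mul_sum]
    _ ≤ _ := hAx ▸ hfin

lemma trace_eq_sum_eig {A : Matrix (Fin n) (Fin n) ℝ} (hA : A.IsHermitian) :
    A.trace = ∑ i, hA.eigenvalues i := by
  nth_rewrite 1 [hA.spectral_theorem]
  rw [Unitary.conjStarAlgAut_apply]
  rw [Matrix.trace_mul_cycle, (Matrix.mem_unitaryGroup_iff').mp hA.eigenvectorUnitary.2,
    Matrix.one_mul, Matrix.trace_diagonal]
  simp

lemma det_eq_prod_eig {A : Matrix (Fin n) (Fin n) ℝ} (hA : A.IsHermitian) :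
    A.det = ∏ i, hA.eigenvalues i := by
  simpa using hA.det_eq_prod_eigenvalues

/-- For `ψ(U) = log det(U + A₀)` on the positive semidefinite cone,
`⟨∇ψ(U),U⟩ = n − tr((A₀+U)⁻¹A₀)` is nonnegative and is eventually dominated
by `ε·(ψ(U) − ψ(0))` as `tr(U) → ∞`; hence `ᾱ_ψ = −1`. -/
theorem stmt_18 {n : ℕ} (hn : 1 ≤ n) (A₀ : Matrix (Fin n) (Fin n) ℝ)
    (hA₀ : A₀.PosDef) :
    ∀ ε > (0:ℝ), ∃ M > (0:ℝ), ∀ U : Matrix (Fin n) (Fin n) ℝ,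
      U.PosSemidef → M ≤ U.trace →
        0 ≤ (n : ℝ) - ((A₀ + U)⁻¹ * A₀).trace ∧
        (n : ℝ) - ((A₀ + U)⁻¹ * A₀).trace ≤
          ε * (Real.log (A₀ + U).det - Real.log A₀.det) := by
  intro ε hε
  classical
  have hne : (Finset.univ : Finset (Fin n)).Nonempty := ⟨⟨0, hn⟩, Finset.mem_univ _⟩
  set c := Finset.univ.inf' hne hA₀.1.eigenvalues with hcdef
  have hcle : ∀ i, c ≤ hA₀.1.eigenvalues i := fun i => Finset.inf'_le _ (Finset.mem_univ i)
  have hcpos : 0 < c := by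
    obtain ⟨i0, _, hi0⟩ := Finset.exists_mem_eq_inf' hne hA₀.1.eigenvalues
    rw [hcdef, hi0]
    exact hA₀.eigenvalues_pos i0
  have hd : 0 < A₀.det := hA₀.det_pos
  have hnR : (0:ℝ) < n := by exact_mod_cast hn
  set M : ℝ := max 1 (n * (Real.exp (n/ε) * A₀.det) / c^(n-1)) with hMdef
  have hM1 : (1:ℝ) ≤ M := le_max_left _ _
  have hMle : n * (Real.exp (n/ε) * A₀.det) / c^(n-1) ≤ M := le_max_right _ _
  refine ⟨M, lt_of_lt_of_le one_pos hM1, fun U hU htr => ?_⟩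
  set B := A₀ + U with hBdef
  have hB : B.PosDef := hA₀.add_posSemidef hU
  have hBinv : B⁻¹ * B = 1 := Matrix.nonsing_inv_mul B hB.det_pos.ne'.isUnit
  have key : (B⁻¹ * A₀).trace + (B⁻¹ * U).trace = n := by
    rw [← Matrix.trace_add, ← Matrix.mul_add, ← hBdef, hBinv, Matrix.trace_one]
    simp
  have h1 : 0 ≤ (B⁻¹ * U).trace := trace_mul_nonneg' hB.inv.posSemidef hU
  have h2 : 0 ≤ (B⁻¹ * A₀).trace := trace_mul_nonneg' hB.inv.posSemidef hA₀.posSemidef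
  refine ⟨by linarith, ?_⟩
  have hdom : (n:ℝ) - (B⁻¹ * A₀).trace ≤ n := by linarith
  -- eigenvalue lower bound for B
  have hBev : ∀ i, c ≤ hB.1.eigenvalues i := by
    intro i
    set v : Fin n → ℝ := ⇑(hB.1.eigenvectorBasis i) with hv
    have hveq : hB.1.eigenvalues i = v ⬝ᵥ (B *ᵥ v) := by
      have := hB.1.eigenvalues_eq i
      simpa using this
    have hn1 : v ⬝ᵥ v = 1 := by
      have h1 := (orthonormal_iff_ite.mp hB.1.eigenvectorBasis.orthonormal) i i
      simp only [if_true, eq_self_iff_true] at h1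
      rw [← h1]
      rw [EuclideanSpace.inner_eq_star_dotProduct, hv]
      simp
    have hq : c * (v ⬝ᵥ v) ≤ v ⬝ᵥ (A₀ *ᵥ v) := quad_lower hA₀.1 hcle v
    have hu : 0 ≤ v ⬝ᵥ (U *ᵥ v) := by simpa using hU.dotProduct_mulVec_nonneg v
    have hsplit : v ⬝ᵥ (B *ᵥ v) = v ⬝ᵥ (A₀ *ᵥ v) + v ⬝ᵥ (U *ᵥ v) := by
      rw [hBdef, Matrix.add_mulVec, dotProduct_add]
    rw [hn1] at hq
    rw [hveq, hsplit]
    linarith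
  have htrB : B.trace = ∑ i, hB.1.eigenvalues i := trace_eq_sum_eig hB.1
  have htrA₀ : 0 ≤ A₀.trace := psd_trace_nonneg hA₀.posSemidef
  have htrBM : M ≤ B.trace := by
    have : B.trace = A₀.trace + U.trace := Matrix.trace_add _ _
    linarith
  -- exists a big eigenvalue
  have hmax : ∃ i, M / n ≤ hB.1.eigenvalues i := by
    by_contra h
    push_neg at h
    have hsum : ∑ i, hB.1.eigenvalues i < ∑ _i : Fin n, M / n :=
      Finset.sum_lt_sum_of_nonempty hne fun i _ => h i
    rw [Finset.sum_const, Finset.card_univ, Fintype.card_fin, nsmul_eq_mul] at hsum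
    rw [mul_div_cancel₀ _ hnR.ne'] at hsum
    linarith [htrB ▸ htrBM]
  obtain ⟨i0, hi0⟩ := hmax
  have hdetB : Real.exp (n/ε) * A₀.det ≤ B.det := by
    rw [det_eq_prod_eig hB.1, ← Finset.mul_prod_erase _ _ (Finset.mem_univ i0)]
    have hprod : c ^ (n-1) ≤ ∏ i ∈ Finset.univ.erase i0, hB.1.eigenvalues i := by
      calc c ^ (n-1) = ∏ _i ∈ Finset.univ.erase i0, c := by
            rw [Finset.prod_const, Finset.card_erase_of_mem (Finset.mem_univ i0),
              Finset.card_univ, Fintype.card_fin]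
        _ ≤ _ := Finset.prod_le_prod (fun _ _ => hcpos.le) (fun i _ => hBev i)
    have hMn : Real.exp (n/ε) * A₀.det ≤ M / n * c ^ (n-1) := by
      have hc1 : (0:ℝ) < c ^ (n-1) := pow_pos hcpos _
      have h4 : (n:ℝ) * (Real.exp (n/ε) * A₀.det) ≤ M * c ^ (n-1) := (div_le_iff₀ hc1).mp hMle
      rw [div_mul_eq_mul_div, le_div_iff₀ hnR]
      nlinarith [h4]
    calc Real.exp (n/ε) * A₀.det ≤ M / n * c ^ (n-1) := hMn
      _ ≤ hB.1.eigenvalues i0 * c ^ (n-1) :=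
          mul_le_mul_of_nonneg_right hi0 (pow_pos hcpos _).le
      _ ≤ hB.1.eigenvalues i0 * ∏ i ∈ Finset.univ.erase i0, hB.1.eigenvalues i :=
          mul_le_mul_of_nonneg_left hprod (le_trans (by positivity) hi0)
  have hlog : n / ε + Real.log A₀.det ≤ Real.log B.det := by
    have hpos : (0:ℝ) < Real.exp (n/ε) * A₀.det := by positivity
    have := Real.log_le_log hpos hdetB
    rwa [Real.log_mul (Real.exp_pos _).ne' hd.ne', Real.log_exp] at this
  have : (n:ℝ) ≤ ε * (Real.log B.det - Real.log A₀.det) := by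
    have h3 : n / ε ≤ Real.log B.det - Real.log A₀.det := by linarith
    calc (n:ℝ) = ε * (n / ε) := by field_simp
      _ ≤ ε * (Real.log B.det - Real.log A₀.det) := mul_le_mul_of_nonneg_left h3 hε.le
  linarith
end
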